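/- arXiv:1401.2290 — 2 statements merged into one kernel-verified Lean document; each statement's English description precedes it below -/
import Mathlib

section
/- Let X be a k-dimensional simplicial complex on a finite vertex set V with Z_{k−1}(X;ℝ) ≠ {0}, suppose h(X) < ∞, let A_0,…,A_k be a partition of V into nonempty parts attaining the minimum in h(X), and let C(X) = max over τ ∈ F^∂(A_0,…,A_k) of Σ_{v∈τ} d(τ∖{v}). If every (k−1)-face of X is contained in at most C faces of dimension k of the completion K(X), then C(X) ≤ (k+1)·C, and consequently λ(X) ≤ ((k+1)·C/|V|)·h(X). -/
open Finset

set_option maxHeartbeats 2000000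

namespace HigherCheeger

variable {V : Type*} [DecidableEq V] [Fintype V] [LinearOrder V]

/-- An abstract simplicial complex: a family of finite subsets of `V`
closed under taking subsets. -/
def IsComplex (X : Finset (Finset V)) : Prop :=
  ∀ σ ∈ X, ∀ τ ⊆ σ, τ ∈ X

/-- `X` is `k`-dimensional: every face has at most `k+1` vertices
and some face has exactly `k+1` vertices. -/
def IsDim (X : Finset (Finset V)) (k : ℕ) : Prop :=
  (∀ σ ∈ X, σ.card ≤ k + 1) ∧ ∃ σ ∈ X, σ.card = k + 1

/-- The faces of `X` of cardinality `c` (i.e. of dimension `c - 1`). -/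
def faces (X : Finset (Finset V)) (c : ℕ) : Finset (Finset V) :=
  X.filter fun σ => σ.card = c

/-- `X` has complete `(k-1)`-skeleton: every subset of `V` of size at most `k` is a face. -/
def CompleteSkeleton (X : Finset (Finset V)) (k : ℕ) : Prop :=
  ∀ σ : Finset V, σ.card ≤ k → σ ∈ X

/-- The `k`-dimensional completion `K(X)`. -/
def completion (X : Finset (Finset V)) (k : ℕ) : Finset (Finset V) :=
  X ∪ (Finset.univ.filter fun τ : Finset V => τ.card = k + 1 ∧ ∀ v ∈ τ, τ.erase v ∈ X)

/-- The complete `k`-dimensional complex `K_n^k` on the vertex set `V`. -/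
def completeComplex (V : Type*) [DecidableEq V] [Fintype V] (k : ℕ) : Finset (Finset V) :=
  Finset.univ.filter fun σ : Finset V => σ.card ≤ k + 1

/-- The oriented incidence number `[τ:σ]` (with respect to the linear order on `V`):
`(-1)^j` if `σ = τ \ {v_j}` where `v_j` is the `j`-th smallest vertex of `τ`, and `0` otherwise. -/
def incidence (τ σ : Finset V) : ℝ :=
  if σ ⊆ τ ∧ σ.card + 1 = τ.card then
    ∑ v ∈ τ \ σ, (-1 : ℝ) ^ (τ.filter fun w => w < v).card
  else 0

/-- The real coboundary operator `δ` applied to a cochain living on the faces of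
cardinality `c`; the result lives on faces of cardinality `c + 1`. -/
def delta (X : Finset (Finset V)) (c : ℕ) (f : Finset V → ℝ) : Finset V → ℝ :=
  fun τ => ∑ σ ∈ faces X c, incidence τ σ * f σ

/-- The real boundary operator `∂` (the adjoint of `δ`) applied to a cochain living
on the faces of cardinality `c`; the result lives on faces of cardinality `c - 1`. -/
def bdry (X : Finset (Finset V)) (c : ℕ) (f : Finset V → ℝ) : Finset V → ℝ :=
  fun σ => ∑ τ ∈ faces X c, incidence τ σ * f τ

/-- The inner product of two cochains on the faces of cardinality `c`. -/
def inn (X : Finset (Finset V)) (c : ℕ) (f g : Finset V → ℝ) : ℝ :=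
  ∑ σ ∈ faces X c, f σ * g σ

/-- The upper Laplacian `L^up_{k-1} = ∂_k δ_{k-1}` acting on `(k-1)`-cochains
(functions on faces of cardinality `k`). -/
def lapUp (X : Finset (Finset V)) (k : ℕ) (f : Finset V → ℝ) : Finset V → ℝ :=
  bdry X (k + 1) (delta X k f)

/-- The lower Laplacian `L^down_{k-1} = δ_{k-2} ∂_{k-1}` acting on `(k-1)`-cochains. -/
def lapDown (X : Finset (Finset V)) (k : ℕ) (f : Finset V → ℝ) : Finset V → ℝ :=
  delta X (k - 1) (bdry X k f)

/-- `f ∈ Z_{k-1}(X;ℝ) = ker ∂_{k-1}`. -/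
def IsCycle (X : Finset (Finset V)) (k : ℕ) (f : Finset V → ℝ) : Prop :=
  ∀ σ : Finset V, bdry X k f σ = 0

/-- `f ∈ B^{k-1}(X;ℝ) = im δ_{k-2}` (as a cochain, i.e. on the `(k-1)`-faces). -/
def IsCobdry (X : Finset (Finset V)) (k : ℕ) (f : Finset V → ℝ) : Prop :=
  ∃ g : Finset V → ℝ, ∀ σ ∈ faces X k, f σ = delta X (k - 1) g σ

/-- The spectral gap `λ(X)`: the minimum of the Rayleigh quotient
`⟨L^up_{k-1}(X) f, f⟩ / ⟨f, f⟩` over nonzero `f ∈ Z_{k-1}(X;ℝ)`. -/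
noncomputable def spectralGap (X : Finset (Finset V)) (k : ℕ) : ℝ :=
  sInf {r : ℝ | ∃ f : Finset V → ℝ, IsCycle X k f ∧ inn X k f f ≠ 0 ∧
    r = inn X k (lapUp X k f) f / inn X k f f}

/-- A partition of `V` into `m` (nonempty) parts. -/
def IsPartition {m : ℕ} (A : Fin m → Finset V) : Prop :=
  (∀ i, (A i).Nonempty) ∧ ∀ v : V, ∃! i, v ∈ A i

/-- The linear order on `V` is adapted to the family of parts `A`. -/
def OrderAdapted {m : ℕ} (A : Fin m → Finset V) : Prop :=
  ∀ i j : Fin m, i < j → ∀ v ∈ A i, ∀ w ∈ A j, v < w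

/-- `F(A_0,…,A_k)`: the `k`-faces of `X` with exactly one vertex in each part. -/
def Fset (X : Finset (Finset V)) (k : ℕ) (A : Fin (k + 1) → Finset V) : Finset (Finset V) :=
  (faces X (k + 1)).filter fun τ => ∀ i, (τ ∩ A i).card = 1

/-- `F^∂(A_0,…,A_k)`: the `(k+1)`-element members of `K(X)` with exactly one vertex
in each part. -/
def Fpar (X : Finset (Finset V)) (k : ℕ) (A : Fin (k + 1) → Finset V) : Finset (Finset V) :=
  (faces (completion X k) (k + 1)).filter fun τ => ∀ i, (τ ∩ A i).card = 1

/-- The value `|V|·|F(A_0,…,A_k)| / |F^∂(A_0,…,A_k)|` of a partition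
(`⊤` if the denominator is `0`). -/
noncomputable def cheegerVal (X : Finset (Finset V)) (k : ℕ) (A : Fin (k + 1) → Finset V) :
    EReal :=
  if (Fpar X k A).card = 0 then ⊤
  else (((Fintype.card V * (Fset X k A).card : ℝ) / ((Fpar X k A).card : ℝ) : ℝ) : EReal)

/-- The Cheeger constant `h(X)`. -/
noncomputable def cheeger (X : Finset (Finset V)) (k : ℕ) : EReal :=
  sInf {r : EReal | ∃ A : Fin (k + 1) → Finset V, IsPartition A ∧ r = cheegerVal X k A}

/-- `d(σ)`: the number of members of `F^∂(A_0,…,A_k)` containing `σ`. -/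
def degPar (X : Finset (Finset V)) (k : ℕ) (A : Fin (k + 1) → Finset V) (σ : Finset V) : ℕ :=
  ((Fpar X k A).filter fun τ => σ ⊆ τ).card

/-- `C(X)` (with respect to the partition `A`):
the maximum over `τ ∈ F^∂(A_0,…,A_k)` of `∑_{v ∈ τ} d(τ \ {v})`. -/
def Cconst (X : Finset (Finset V)) (k : ℕ) (A : Fin (k + 1) → Finset V) : ℕ :=
  (Fpar X k A).sup fun τ => ∑ v ∈ τ, degPar X k A (τ.erase v)

/-- The cochain associated to a partition `A`: `σ ↦ (-1)^l·|A_l|` if `A_l` is the unique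
part disjoint from `σ`, and `0` otherwise. -/
def assocCochain {k : ℕ} (A : Fin (k + 1) → Finset V) (σ : Finset V) : ℝ :=
  if (Finset.univ.filter fun l => σ ∩ A l = ∅).card = 1 then
    ∑ l ∈ Finset.univ.filter fun l => σ ∩ A l = ∅, (-1 : ℝ) ^ (l : ℕ) * ((A l).card : ℝ)
  else 0

/-- The `Z₂`-coboundary: a `(c-1)`-cochain `f` is sent to
`τ ↦ ∑_{v ∈ τ} f (τ \ {v})`. -/
def deltaZ2 (f : Finset V → ZMod 2) (τ : Finset V) : ZMod 2 :=
  ∑ v ∈ τ, f (τ.erase v)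

/-- The support of the `Z₂`-coboundary of `f` in `X`: the faces of `X` of cardinality
`k + 1` on which the `Z₂`-coboundary of `f` is nonzero.  Its cardinality is `|δ_X f|`. -/
def suppDelta (X : Finset (Finset V)) (k : ℕ) (f : Finset V → ZMod 2) : Finset (Finset V) :=
  (faces X (k + 1)).filter fun τ => deltaZ2 f τ ≠ 0

/-- `F(A_0,…,A_{k-1})`: the `(k-1)`-faces of `X` with exactly one vertex in each of
the `k` parts. -/
def FsetLow (X : Finset (Finset V)) (k : ℕ) (A : Fin k → Finset V) : Finset (Finset V) :=
  (faces X k).filter fun σ => ∀ i, (σ ∩ A i).card = 1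

/-- The Cheeger-type constant `h'(X)`. -/
noncomputable def cheeger' (X : Finset (Finset V)) (k : ℕ) : EReal :=
  sInf {r : EReal | ∃ (A : Fin k → Finset V) (f : Finset V → ZMod 2),
    IsPartition A ∧ (∀ σ, f σ ≠ 0 → σ ∈ FsetLow X k A) ∧
    r = if (suppDelta (completion X k) k f).card = 0 then (⊤ : EReal)
        else (((Fintype.card V * (suppDelta X k f).card : ℝ) /
              ((suppDelta (completion X k) k f).card : ℝ) : ℝ) : EReal)}

/-- The Hamming norm of a `Z₂`-cochain on the faces of cardinality `c`. -/
def hamming (X : Finset (Finset V)) (c : ℕ) (f : Finset V → ZMod 2) : ℕ :=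
  ((faces X c).filter fun σ => f σ ≠ 0).card

/-- `|[f]|`: the minimum Hamming norm of `f + δ_X g` over `g ∈ C^{k-2}(X;Z₂)`. -/
noncomputable def normClass (X : Finset (Finset V)) (k : ℕ) (f : Finset V → ZMod 2) : ℕ :=
  sInf {m : ℕ | ∃ g : Finset V → ZMod 2, m = hamming X k fun σ => f σ + deltaZ2 g σ}

/-- The coboundary expansion `φ(X) = min_f |δ_X f| / |[f]|` (quotients with denominator
`0` are `∞`). -/
noncomputable def phi (X : Finset (Finset V)) (k : ℕ) : EReal :=
  sInf {r : EReal | ∃ f : Finset V → ZMod 2,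
    r = if normClass X k f = 0 then (⊤ : EReal)
        else ((((suppDelta X k f).card : ℝ) / (normClass X k f : ℝ) : ℝ) : EReal)}

/-- `h̃(X) = min_f |V|·|δ_X f| / |δ_{K(X)} f|` (quotients with denominator `0` are `∞`). -/
noncomputable def htilde (X : Finset (Finset V)) (k : ℕ) : EReal :=
  sInf {r : EReal | ∃ f : Finset V → ZMod 2,
    r = if (suppDelta (completion X k) k f).card = 0 then (⊤ : EReal)
        else (((Fintype.card V * (suppDelta X k f).card : ℝ) /
              ((suppDelta (completion X k) k f).card : ℝ) : ℝ) : EReal)}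



section AuxiliaryLemmas

set_option linter.unusedSectionVars false
set_option maxHeartbeats 1000000

lemma incidence_erase (τ : Finset V) (v : V) (hv : v ∈ τ) :
    incidence τ (τ.erase v) = (-1:ℝ)^((τ.filter fun w => w < v).card) := by
  have h1 : 1 ≤ τ.card := card_pos.2 ⟨v, hv⟩
  rw [incidence, if_pos ⟨erase_subset _ _, by rw [card_erase_of_mem hv]; omega⟩,
    sdiff_erase_self hv, sum_singleton]

lemma incidence_zero {τ σ : Finset V} (h : ¬(σ ⊆ τ ∧ σ.card + 1 = τ.card)) :
    incidence τ σ = 0 := if_neg h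

lemma abs_incidence_le (τ σ : Finset V) :
    |incidence τ σ| ≤ if σ ⊆ τ then 1 else 0 := by
  rw [incidence]
  by_cases h : σ ⊆ τ ∧ σ.card + 1 = τ.card
  · rw [if_pos h, if_pos h.1]
    obtain ⟨u, hu⟩ : ∃ u, τ \ σ = {u} := by
      rw [← card_eq_one, card_sdiff_of_subset h.1]; omega
    rw [hu, sum_singleton, abs_pow, abs_neg, abs_one, one_pow]
  · rw [if_neg h]
    split <;> simp

lemma erase_eq_of_sdiff_singleton {τ σ : Finset V} (hσ : σ ⊆ τ) {v : V}
    (h : τ \ σ = {v}) : τ.erase v = σ := by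
  ext x
  simp only [mem_erase]
  constructor
  · rintro ⟨hxv, hxτ⟩
    by_contra hxσ
    have : x ∈ τ \ σ := mem_sdiff.2 ⟨hxτ, hxσ⟩
    rw [h, mem_singleton] at this; exact hxv this
  · intro hxσ
    refine ⟨fun hxv => ?_, hσ hxσ⟩
    have : v ∈ τ \ σ := by rw [h]; exact mem_singleton_self v
    exact (mem_sdiff.1 this).2 (hxv ▸ hxσ)

lemma delta_facets (X : Finset (Finset V)) (k : ℕ) (f : Finset V → ℝ) (τ : Finset V)
    (hcard : τ.card = k + 1) (hfac : ∀ v ∈ τ, τ.erase v ∈ X) :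
    delta X k f τ = ∑ v ∈ τ, (-1:ℝ)^((τ.filter fun w => w < v).card) * f (τ.erase v) := by
  rw [delta]
  rw [← sum_filter_of_ne (p := fun σ => σ ⊆ τ)
    (fun σ _ hne => by by_contra hs; exact hne (by rw [incidence_zero (fun hh => hs hh.1), zero_mul]))]
  refine (sum_bij (i := fun v hv => τ.erase v) ?_ ?_ ?_ ?_).symm
  · intro v hv
    simp only [mem_filter, faces, mem_filter]
    exact ⟨⟨hfac v hv, by rw [card_erase_of_mem hv, hcard]; omega⟩, erase_subset _ _⟩
  · intro u hu w hw h
    by_contra hne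
    have h' : τ.erase u = τ.erase w := h
    exact (notMem_erase u τ) (h' ▸ mem_erase.2 ⟨hne, hu⟩)
  · intro σ hσ
    simp only [mem_filter, faces, mem_filter] at hσ
    obtain ⟨⟨hσX, hσc⟩, hστ⟩ := hσ
    obtain ⟨v, hv⟩ : ∃ v, τ \ σ = {v} := by
      rw [← card_eq_one, card_sdiff_of_subset hστ]; omega
    have hvτ : v ∈ τ := by
      have : v ∈ τ \ σ := by rw [hv]; exact mem_singleton_self v
      exact (mem_sdiff.1 this).1
    exact ⟨v, hvτ, show τ.erase v = σ from erase_eq_of_sdiff_singleton hστ hv⟩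
  · intro v hv
    rw [incidence_erase τ v hv]

lemma rk_erase_pow {τ : Finset V} {u w : V} (hu : u ∈ τ) (huw : u ≠ w) :
    ((-1:ℝ))^(((τ.erase u).filter fun x => x < w).card) =
      (if u < w then -1 else 1) * (-1:ℝ)^((τ.filter fun x => x < w).card) := by
  rw [filter_erase]
  by_cases h : u < w
  · have hus : u ∈ τ.filter fun x => x < w := mem_filter.2 ⟨hu, h⟩
    have : (τ.filter fun x => x < w).card = ((τ.filter fun x => x < w).erase u).card + 1 := by
      rw [card_erase_of_mem hus]
      have : 1 ≤ (τ.filter fun x => x < w).card := card_pos.2 ⟨u, hus⟩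
      omega
    rw [if_pos h, this, pow_succ]
    ring
  · have he : u ∉ τ.filter fun x => x < w := fun hc => h (mem_filter.1 hc).2
    rw [if_neg h, erase_eq_of_notMem he, one_mul]

lemma pair_cancel (τ : Finset V) (k : ℕ) (hcard : τ.card = k + 1) (ρ : Finset V) :
    ∑ v ∈ τ, (-1:ℝ)^((τ.filter fun w => w < v).card) * incidence (τ.erase v) ρ = 0 := by
  by_cases hρ : ρ ⊆ τ ∧ ρ.card + 2 = τ.card
  · obtain ⟨hρτ, hρc⟩ := hρ
    obtain ⟨u, w, huw, huv⟩ : ∃ u w, u ≠ w ∧ τ \ ρ = {u, w} := by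
      have : (τ \ ρ).card = 2 := by rw [card_sdiff_of_subset hρτ]; omega
      obtain ⟨u, w, h1, h2⟩ := card_eq_two.1 this
      exact ⟨u, w, h1, h2⟩
    have huτ : u ∈ τ := (mem_sdiff.1 (huv ▸ mem_insert_self u {w})).1
    have hwτ : w ∈ τ := (mem_sdiff.1 (huv ▸ mem_insert_of_mem (mem_singleton_self w))).1
    have hsum : ∀ v ∈ τ, v ∉ ({u, w} : Finset V) →
        (-1:ℝ)^((τ.filter fun x => x < v).card) * incidence (τ.erase v) ρ = 0 := by
      intro v hv hvuw
      have hvρ : v ∈ ρ := by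
        by_contra hc
        exact hvuw (huv ▸ mem_sdiff.2 ⟨hv, hc⟩)
      rw [incidence_zero (fun hc => (notMem_erase v τ) (hc.1 hvρ)), mul_zero]
    have hss : ({u, w} : Finset V) ⊆ τ := by
      intro x hx
      rcases mem_insert.1 hx with h | h
      · exact h ▸ huτ
      · exact (mem_singleton.1 h) ▸ hwτ
    rw [← sum_subset hss hsum, sum_pair huw]
    have herase : ∀ a b : V, a ≠ b → τ \ ρ = {a, b} → (τ.erase a).erase b = ρ := by
      intro a b hab hab2
      have hmem : ∀ x : V, (x ∈ τ ∧ x ∉ ρ) ↔ (x = a ∨ x = b) := by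
        intro x
        have : x ∈ τ \ ρ ↔ x ∈ ({a, b} : Finset V) := by rw [hab2]
        simpa [mem_sdiff, mem_insert, mem_singleton] using this
      apply erase_eq_of_sdiff_singleton
      · intro x hx
        refine mem_erase.2 ⟨fun hc => ((hmem a).2 (Or.inl rfl)).2 (hc ▸ hx), hρτ hx⟩
      · ext x
        simp only [mem_sdiff, mem_erase, mem_singleton]
        constructor
        · rintro ⟨⟨hxa, hxτ⟩, hxρ⟩
          rcases (hmem x).1 ⟨hxτ, hxρ⟩ with h | h
          · exact absurd h hxa
          · exact h
        · rintro rfl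
          have hb := (hmem x).2 (Or.inr rfl)
          exact ⟨⟨fun hc => hab hc.symm, hb.1⟩, hb.2⟩
    have h1 : incidence (τ.erase u) ρ = (-1:ℝ)^(((τ.erase u).filter fun x => x < w).card) := by
      rw [← herase u w huw huv]
      exact incidence_erase _ w (mem_erase.2 ⟨fun hc => huw hc.symm, hwτ⟩)
    have h2 : incidence (τ.erase w) ρ = (-1:ℝ)^(((τ.erase w).filter fun x => x < u).card) := by
      have huv' : τ \ ρ = {w, u} := by rw [huv]; exact pair_comm u w
      rw [← herase w u (Ne.symm huw) huv']
      exact incidence_erase _ u (mem_erase.2 ⟨huw, huτ⟩)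
    rw [h1, h2, rk_erase_pow huτ huw, rk_erase_pow hwτ (Ne.symm huw)]
    rcases lt_or_gt_of_ne huw with h | h
    · rw [if_pos h, if_neg (not_lt.2 h.le)]; ring
    · rw [if_neg (not_lt.2 h.le), if_pos h]; ring
  · apply sum_eq_zero
    intro v hv
    rw [incidence_zero, mul_zero]
    rintro ⟨hsub, hc⟩
    rw [card_erase_of_mem hv] at hc
    exact hρ ⟨hsub.trans (erase_subset _ _), by omega⟩

lemma dd_zero (X : Finset (Finset V)) (k : ℕ) (h : Finset V → ℝ) (τ : Finset V)
    (hcard : τ.card = k + 1) (hfac : ∀ v ∈ τ, τ.erase v ∈ X) :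
    delta X k (delta X (k-1) h) τ = 0 := by
  rw [delta_facets X k _ τ hcard hfac]
  have : ∀ v ∈ τ, (-1:ℝ)^((τ.filter fun w => w < v).card) * delta X (k-1) h (τ.erase v)
      = ∑ ρ ∈ faces X (k-1),
          (-1:ℝ)^((τ.filter fun w => w < v).card) * incidence (τ.erase v) ρ * h ρ := by
    intro v hv
    rw [delta, mul_sum]
    exact sum_congr rfl fun ρ _ => by ring
  rw [sum_congr rfl this, sum_comm]
  apply sum_eq_zero
  intro ρ _
  rw [← sum_mul, pair_cancel τ k hcard ρ, zero_mul]

lemma delta_sub (X : Finset (Finset V)) (c : ℕ) (f g : Finset V → ℝ) (τ : Finset V) :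
    delta X c (fun σ => f σ - g σ) τ = delta X c f τ - delta X c g τ := by
  simp only [delta, mul_sub, sum_sub_distrib]

lemma delta_add' (X : Finset (Finset V)) (c : ℕ) (f g : Finset V → ℝ) (τ : Finset V) :
    delta X c (fun σ => f σ + g σ) τ = delta X c f τ + delta X c g τ := by
  simp [delta, mul_add, sum_add_distrib]

lemma delta_smul' (X : Finset (Finset V)) (c : ℕ) (r : ℝ) (f : Finset V → ℝ) (τ : Finset V) :
    delta X c (fun σ => r * f σ) τ = r * delta X c f τ := by
  simp only [delta, mul_sum]
  exact sum_congr rfl fun ρ _ => by ring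

lemma inn_bdry (X : Finset (Finset V)) (c : ℕ) (G f : Finset V → ℝ) :
    inn X c (bdry X (c+1) G) f = inn X (c+1) G (delta X c f) := by
  simp only [inn, bdry, delta, sum_mul, mul_sum]
  rw [sum_comm]
  exact sum_congr rfl fun τ _ => sum_congr rfl fun σ _ => by ring

/-- inversion count of a finset w.r.t. a labeling `p`. -/
def invP {m : ℕ} (p : V → Fin m) (τ : Finset V) : ℕ :=
  ∑ u ∈ τ, ∑ w ∈ τ, if u < w ∧ p w < p u then 1 else 0

def iw {m : ℕ} (p : V → Fin m) (τ : Finset V) (v : V) : ℕ :=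
  ∑ u ∈ τ, if (u < v ∧ p v < p u) ∨ (v < u ∧ p u < p v) then 1 else 0

noncomputable def fF {m : ℕ} (A : Fin m → Finset V) (p : V → Fin m) (k : ℕ)
    (σ : Finset V) : ℝ :=
  if σ.card = k ∧ (σ.image p).card = k then
    (-1:ℝ)^(invP p σ) * ∑ l ∈ Finset.univ \ σ.image p, ((-1:ℝ)^(l:ℕ) * ((A l).card : ℝ))
  else 0

lemma invP_erase {m : ℕ} (p : V → Fin m) (τ : Finset V) (v : V) (hv : v ∈ τ) :
    invP p τ = invP p (τ.erase v) + iw p τ v := by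
  have hins : τ = insert v (τ.erase v) := (insert_erase hv).symm
  have hvne : v ∉ τ.erase v := notMem_erase v τ
  rw [invP]
  nth_rewrite 1 [hins]
  rw [sum_insert hvne]
  have h1 : ∀ u ∈ τ.erase v, (∑ w ∈ τ, if u < w ∧ p w < p u then 1 else 0) =
      (if u < v ∧ p v < p u then 1 else 0) +
      ∑ w ∈ τ.erase v, if u < w ∧ p w < p u then 1 else 0 := by
    intro u _
    nth_rewrite 1 [hins]
    rw [sum_insert hvne]
  have h0 : (∑ w ∈ τ, if v < w ∧ p w < p v then 1 else 0) =
      ∑ w ∈ τ.erase v, if v < w ∧ p w < p v then 1 else 0 := by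
    nth_rewrite 1 [hins]
    rw [sum_insert hvne, if_neg (by simp), zero_add]
  rw [h0, sum_congr rfl h1, sum_add_distrib]
  have : iw p τ v = (∑ u ∈ τ.erase v, if u < v ∧ p v < p u then 1 else 0) +
      ∑ w ∈ τ.erase v, if v < w ∧ p w < p v then 1 else 0 := by
    rw [iw]
    nth_rewrite 1 [hins]
    rw [sum_insert hvne, if_neg (by simp), zero_add, ← sum_add_distrib]
    apply sum_congr rfl
    intro u hu
    have huv : u ≠ v := (mem_erase.1 hu).1
    rcases lt_or_gt_of_ne huv with h | h
    · simp [h, not_lt.2 h.le, lt_asymm h]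
    · simp [h, not_lt.2 h.le, lt_asymm h]
  rw [invP, this]
  ring

lemma par_parity {m : ℕ} (p : V → Fin m) (τ : Finset V) (v : V) :
    (τ.filter fun w => w < v).card + iw p τ v =
      (τ.filter fun u => p u < p v).card + (τ.filter fun u => u < v ∧ p u = p v).card
        + 2 * (τ.filter fun u => u < v ∧ p v < p u).card := by
  simp only [card_filter, iw, mul_sum, ← sum_add_distrib]
  apply sum_congr rfl
  intro u _
  rcases lt_trichotomy u v with h | h | h <;>
    rcases lt_trichotomy (p u) (p v) with h' | h' | h' <;>
      simp [h, h', lt_asymm, not_lt.2 h'.le, le_of_eq, lt_irrefl] <;> omega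

lemma image_erase_injOn {m : ℕ} (p : V → Fin m) {τ : Finset V}
    (hinj : Set.InjOn p ↑τ) {v : V} (hv : v ∈ τ) :
    (τ.erase v).image p = (τ.image p).erase (p v) := by
  ext i
  simp only [mem_image, mem_erase]
  constructor
  · rintro ⟨u, ⟨huv, huτ⟩, rfl⟩
    exact ⟨fun hc => huv (hinj huτ hv hc), u, huτ, rfl⟩
  · rintro ⟨hiv, u, huτ, rfl⟩
    exact ⟨u, ⟨fun hc => hiv (by rw [hc]), huτ⟩, rfl⟩

lemma card_filter_lt_part {k : ℕ} (p : V → Fin (k+1)) {τ : Finset V}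
    (hinj : Set.InjOn p ↑τ) (himg : τ.image p = Finset.univ) (v : V) :
    (τ.filter fun u => p u < p v).card = (p v : ℕ) := by
  have h1 : (τ.filter fun u => p u < p v).image p = Finset.univ.filter fun i => i < p v := by
    rw [← himg, filter_image]
  have h2 : ((τ.filter fun u => p u < p v).image p).card
      = (τ.filter fun u => p u < p v).card :=
    card_image_of_injOn (hinj.mono (by simp [Set.subset_def]; intro x hx _; exact hx))
  have h3 : (Finset.univ.filter fun i => i < p v) = Finset.Iio (p v) := by
    ext i; simp
  rw [← h2, h1, h3, Fin.card_Iio]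

lemma key1 {k : ℕ} (A : Fin (k+1) → Finset V) (p : V → Fin (k+1)) (τ : Finset V)
    (hτ : τ.card = k+1) (hinj : Set.InjOn p ↑τ) (v : V) (hv : v ∈ τ) :
    (-1:ℝ)^((τ.filter fun w => w < v).card) * fF A p k (τ.erase v)
      = (-1:ℝ)^(invP p τ) * ((A (p v)).card : ℝ) := by
  have himgc : (τ.image p).card = k + 1 := by rw [card_image_of_injOn hinj, hτ]
  have himg : τ.image p = Finset.univ := by
    apply eq_univ_of_card
    rw [himgc]; simp
  have hpv : p v ∈ τ.image p := mem_image_of_mem p hv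
  have hcond : (τ.erase v).card = k ∧ ((τ.erase v).image p).card = k := by
    constructor
    · rw [card_erase_of_mem hv, hτ]; omega
    · rw [image_erase_injOn p hinj hv, card_erase_of_mem hpv, himgc]
      omega
  rw [fF, if_pos hcond, image_erase_injOn p hinj hv, himg]
  rw [sdiff_erase_self (mem_univ (p v)), sum_singleton]
  have hE : (τ.filter fun u => u < v ∧ p u = p v) = ∅ := by
    apply filter_eq_empty_iff.2
    intro u hu
    rintro ⟨h1, h2⟩
    exact absurd (hinj hu hv h2) (ne_of_lt h1)
  have hpar := par_parity p τ v
  rw [hE, card_empty, card_filter_lt_part p hinj himg v] at hpar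
  have hiw : (-1:ℝ)^(iw p τ v) * (-1:ℝ)^((τ.filter fun w => w < v).card)
      = (-1:ℝ)^((p v : ℕ)) := by
    rw [← pow_add]
    have : iw p τ v + (τ.filter fun w => w < v).card
        = ((p v:ℕ) + 0) + 2 * (τ.filter fun u => u < v ∧ p v < p u).card := by omega
    rw [this, pow_add, pow_mul]
    simp
  have hsq : ∀ n : ℕ, ((-1:ℝ)^n)*((-1:ℝ)^n) = 1 := by
    intro n; rw [← pow_add, ← two_mul, pow_mul]; norm_num
  have key : (-1:ℝ)^((τ.filter fun w => w < v).card) * (-1:ℝ)^((p v : ℕ))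
      = (-1:ℝ)^(iw p τ v) := by
    calc (-1:ℝ)^((τ.filter fun w => w < v).card) * (-1:ℝ)^((p v : ℕ))
        = (-1:ℝ)^((τ.filter fun w => w < v).card) *
          ((-1:ℝ)^(iw p τ v) * (-1:ℝ)^((τ.filter fun w => w < v).card)) := by rw [hiw]
      _ = (-1:ℝ)^(iw p τ v) *
          ((-1:ℝ)^((τ.filter fun w => w < v).card) * (-1:ℝ)^((τ.filter fun w => w < v).card)) := by
          ring
      _ = (-1:ℝ)^(iw p τ v) := by rw [hsq]; ring
  rw [invP_erase p τ v hv, pow_add]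
  linear_combination ((-1:ℝ)^(invP p (τ.erase v)) * (((A (p v)).card : ℝ))) * key

lemma npow_neg_one_mod2 (m : ℕ) : ((-1:ℝ))^m = (-1)^(m % 2) := by
  conv_lhs => rw [← Nat.div_add_mod m 2]
  rw [pow_add, pow_mul]
  norm_num

lemma neg_one_pow_ne_parity {m n : ℕ} (h : m % 2 ≠ n % 2) : ((-1:ℝ))^m = -(-1)^n := by
  rw [npow_neg_one_mod2 m, npow_neg_one_mod2 n]
  have hm : m % 2 = 0 ∨ m % 2 = 1 := by omega
  have hn : n % 2 = 0 ∨ n % 2 = 1 := by omega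
  rcases hm with hm | hm <;> rcases hn with hn | hn
  · exact absurd (hm.trans hn.symm) h
  · rw [hm, hn]; norm_num
  · rw [hm, hn]; norm_num
  · exact absurd (hm.trans hn.symm) h

lemma image_erase_double {m : ℕ} (p : V → Fin m) {τ : Finset V} {u w : V}
    (hw : w ∈ τ) (huw : u ≠ w) (hpuw : p u = p w) :
    (τ.erase u).image p = τ.image p := by
  ext i
  simp only [mem_image, mem_erase]
  constructor
  · rintro ⟨x, ⟨_, hxτ⟩, rfl⟩
    exact ⟨x, hxτ, rfl⟩
  · rintro ⟨x, hxτ, rfl⟩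
    by_cases hxu : x = u
    · exact ⟨w, ⟨Ne.symm huw, hw⟩, by rw [← hpuw, hxu]⟩
    · exact ⟨x, ⟨hxu, hxτ⟩, rfl⟩

lemma key2 {k : ℕ} (A : Fin (k+1) → Finset V) (p : V → Fin (k+1)) (τ : Finset V)
    (hτ : τ.card = k+1) (himg : (τ.image p).card = k) (u w : V)
    (hu : u ∈ τ) (hw : w ∈ τ) (huw : u ≠ w) (hpuw : p u = p w)
    (hfib : ∀ x ∈ τ, p x = p u → x = u ∨ x = w) :
    (-1:ℝ)^((τ.filter fun x => x < u).card) * fF A p k (τ.erase u)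
      + (-1:ℝ)^((τ.filter fun x => x < w).card) * fF A p k (τ.erase w) = 0 := by
  have hcondu : (τ.erase u).card = k ∧ ((τ.erase u).image p).card = k := by
    refine ⟨by rw [card_erase_of_mem hu, hτ]; omega, ?_⟩
    rw [image_erase_double p hw huw hpuw, himg]
  have hcondw : (τ.erase w).card = k ∧ ((τ.erase w).image p).card = k := by
    refine ⟨by rw [card_erase_of_mem hw, hτ]; omega, ?_⟩
    rw [image_erase_double p hu (Ne.symm huw) hpuw.symm, himg]
  rw [fF, fF, if_pos hcondu, if_pos hcondw,
    image_erase_double p hw huw hpuw, image_erase_double p hu (Ne.symm huw) hpuw.symm]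
  set c : ℝ := ∑ l ∈ Finset.univ \ τ.image p, ((-1:ℝ)^(l:ℕ) * ((A l).card : ℝ)) with hc
  have hEu : (τ.filter fun x => x < u ∧ p x = p u).card = if w < u then 1 else 0 := by
    by_cases hwu : w < u
    · rw [if_pos hwu]
      rw [card_eq_one]
      refine ⟨w, ?_⟩
      ext x
      simp only [mem_filter, mem_singleton]
      constructor
      · rintro ⟨hxτ, hxu, hpx⟩
        rcases hfib x hxτ hpx with rfl | rfl
        · exact absurd hxu (lt_irrefl x)
        · rfl
      · rintro rfl
        exact ⟨hw, hwu, hpuw.symm⟩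
    · rw [if_neg hwu, card_eq_zero]
      apply filter_eq_empty_iff.2
      intro x hxτ
      rintro ⟨hxu, hpx⟩
      rcases hfib x hxτ hpx with rfl | rfl
      · exact absurd hxu (lt_irrefl x)
      · exact hwu hxu
  have hEw : (τ.filter fun x => x < w ∧ p x = p w).card = if u < w then 1 else 0 := by
    by_cases huw' : u < w
    · rw [if_pos huw']
      rw [card_eq_one]
      refine ⟨u, ?_⟩
      ext x
      simp only [mem_filter, mem_singleton]
      constructor
      · rintro ⟨hxτ, hxw, hpx⟩
        rcases hfib x hxτ (by rw [hpx, hpuw]) with rfl | rfl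
        · rfl
        · exact absurd hxw (lt_irrefl x)
      · rintro rfl
        exact ⟨hu, huw', hpuw⟩
    · rw [if_neg huw', card_eq_zero]
      apply filter_eq_empty_iff.2
      intro x hxτ
      rintro ⟨hxw, hpx⟩
      rcases hfib x hxτ (by rw [hpx, hpuw]) with rfl | rfl
      · exact huw' hxw
      · exact absurd hxw (lt_irrefl x)
  have hF1 := invP_erase p τ u hu
  have hF2 := invP_erase p τ w hw
  have hF3 := par_parity p τ u
  have hF4 := par_parity p τ w
  rw [hEu] at hF3
  rw [hEw] at hF4
  have hPeq : (τ.filter fun x => p x < p u).card = (τ.filter fun x => p x < p w).card := by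
    rw [hpuw]
  have hne : ((τ.filter fun x => x < u).card + invP p (τ.erase u)) % 2
      ≠ ((τ.filter fun x => x < w).card + invP p (τ.erase w)) % 2 := by
    rcases lt_or_gt_of_ne huw with h | h
    · rw [if_neg (not_lt.2 h.le)] at hF3
      rw [if_pos h] at hF4
      omega
    · rw [if_pos h] at hF3
      rw [if_neg (not_lt.2 h.le)] at hF4
      omega
  have := neg_one_pow_ne_parity hne
  rw [pow_add, pow_add] at this
  linear_combination c * this

noncomputable def pidx {m : ℕ} (A : Fin m → Finset V) (hA : IsPartition A) (v : V) : Fin m :=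
  (hA.2 v).choose

lemma pidx_mem {m : ℕ} (A : Fin m → Finset V) (hA : IsPartition A) (v : V) :
    v ∈ A (pidx A hA v) := (hA.2 v).choose_spec.1

lemma pidx_eq_iff {m : ℕ} (A : Fin m → Finset V) (hA : IsPartition A) {v : V} {i : Fin m} :
    v ∈ A i ↔ pidx A hA v = i :=
  ⟨fun h => ((hA.2 v).choose_spec.2 i h).symm, fun h => h ▸ pidx_mem A hA v⟩

lemma inter_fiber {m : ℕ} (A : Fin m → Finset V) (hA : IsPartition A) (τ : Finset V)
    (i : Fin m) : τ ∩ A i = τ.filter fun v => pidx A hA v = i := by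
  ext v
  simp only [mem_inter, mem_filter, pidx_eq_iff A hA]

lemma sum_card_parts {m : ℕ} (A : Fin m → Finset V) (hA : IsPartition A) :
    ∑ l, (A l).card = Fintype.card V := by
  rw [← card_univ,
    card_eq_sum_card_fiberwise (f := pidx A hA) (t := Finset.univ) (fun x _ => mem_univ _)]
  apply sum_congr rfl
  intro i _
  congr 1
  ext v
  simp [pidx_eq_iff A hA]

lemma pair_image_card {m : ℕ} (p : V → Fin m) {s : Finset V} {u w : V}
    (hu : u ∈ s) (hw : w ∈ s) (huw : u ≠ w) (hpuw : p u = p w) :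
    (s.image p).card + 1 ≤ s.card := by
  have h1 : (s.erase u).image p = s.image p := by
    ext i
    simp only [mem_image, mem_erase]
    constructor
    · rintro ⟨x, ⟨_, hxτ⟩, rfl⟩
      exact ⟨x, hxτ, rfl⟩
    · rintro ⟨x, hxτ, rfl⟩
      by_cases hxu : x = u
      · exact ⟨w, ⟨Ne.symm huw, hw⟩, by rw [← hpuw, hxu]⟩
      · exact ⟨x, ⟨hxu, hxτ⟩, rfl⟩
  have h2 := card_image_le (s := s.erase u) (f := p)
  rw [h1, card_erase_of_mem hu] at h2
  have h3 : 1 ≤ s.card := card_pos.2 ⟨u, hu⟩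
  omega

lemma onePer_iff {k : ℕ} (A : Fin (k+1) → Finset V) (hA : IsPartition A) (τ : Finset V)
    (hcard : τ.card = k + 1) :
    (∀ i, (τ ∩ A i).card = 1) ↔ (τ.image (pidx A hA)).card = k + 1 := by
  set p := pidx A hA with hp
  constructor
  · intro hJ
    have hinj : Set.InjOn p ↑τ := by
      intro x hx y hy hxy
      by_contra hne
      have hfib := hJ (p x)
      rw [inter_fiber A hA] at hfib
      obtain ⟨a, ha⟩ := card_eq_one.1 hfib
      have hxa : x ∈ τ.filter fun v => p v = p x := mem_filter.2 ⟨hx, rfl⟩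
      have hya : y ∈ τ.filter fun v => p v = p x := mem_filter.2 ⟨hy, hxy.symm ▸ rfl⟩
      rw [ha, mem_singleton] at hxa hya
      exact hne (hxa.trans hya.symm)
    rw [card_image_of_injOn hinj, hcard]
  · intro himg
    have hinj : Set.InjOn p ↑τ := card_image_iff.1 (by rw [himg, hcard])
    have huniv : τ.image p = Finset.univ := eq_univ_of_card _ (by rw [himg]; simp)
    intro i
    rw [inter_fiber A hA]
    have hi : i ∈ τ.image p := huniv ▸ mem_univ i
    obtain ⟨v, hvτ, hvp⟩ := mem_image.1 hi
    rw [card_eq_one]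
    refine ⟨v, ?_⟩
    ext x
    simp only [mem_filter, mem_singleton]
    constructor
    · rintro ⟨hxτ, hxp⟩
      exact hinj hxτ hvτ (by rw [← hp] at hxp; rw [hxp, hvp])
    · rintro rfl
      exact ⟨hvτ, hvp⟩

lemma delta_fF {k : ℕ} (X : Finset (Finset V)) (A : Fin (k+1) → Finset V)
    (hA : IsPartition A) (τ : Finset V) (hcard : τ.card = k + 1)
    (hfac : ∀ v ∈ τ, τ.erase v ∈ X) :
    delta X k (fF A (pidx A hA) k) τ =
      if ∀ i, (τ ∩ A i).card = 1 then
        (-1:ℝ)^(invP (pidx A hA) τ) * (Fintype.card V : ℝ)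
      else 0 := by
  set p := pidx A hA with hp
  rw [delta_facets X k _ τ hcard hfac]
  by_cases hJ : ∀ i, (τ ∩ A i).card = 1
  · rw [if_pos hJ]
    have himg : (τ.image p).card = k + 1 := (onePer_iff A hA τ hcard).1 hJ
    have hinj : Set.InjOn p ↑τ := card_image_iff.1 (by rw [himg, hcard])
    have huniv : τ.image p = Finset.univ := eq_univ_of_card _ (by rw [himg]; simp)
    rw [sum_congr rfl (fun v hv => key1 A p τ hcard hinj v hv), ← mul_sum]
    congr 1
    have himgsum : ∑ l ∈ τ.image p, ((A l).card : ℝ) = ∑ v ∈ τ, ((A (p v)).card : ℝ) :=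
      sum_image (fun x hx y hy h => hinj hx hy h)
    rw [← himgsum, huniv, ← sum_card_parts A hA]
    push_cast
    rfl
  · rw [if_neg hJ]
    have himgle : (τ.image p).card ≤ k + 1 := by
      have := card_image_le (s := τ) (f := p)
      omega
    have himgne : (τ.image p).card ≠ k + 1 := fun h => hJ ((onePer_iff A hA τ hcard).2 h)
    by_cases hk : (τ.image p).card = k
    · have hninj : ¬ Set.InjOn p ↑τ := fun h => himgne (by rw [card_image_of_injOn h, hcard])
      obtain ⟨u, hu, w, hw, hpuw, huw⟩ : ∃ u ∈ τ, ∃ w ∈ τ, p u = p w ∧ u ≠ w := by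
        by_contra hc
        push_neg at hc
        exact hninj fun x hx y hy hxy => by_contra fun hne => hne (hc x hx y hy hxy)
      have hfib : ∀ x ∈ τ, p x = p u → x = u ∨ x = w := by
        intro x hx hpx
        by_contra hcon
        push_neg at hcon
        obtain ⟨hxu, hxw⟩ := hcon
        have hu' : u ∈ τ.erase x := mem_erase.2 ⟨fun h => hxu h.symm, hu⟩
        have hw' : w ∈ τ.erase x := mem_erase.2 ⟨fun h => hxw h.symm, hw⟩
        have h1 := pair_image_card p hu' hw' huw hpuw
        have h2 : ((τ.erase x).image p) = τ.image p := by
          ext i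
          simp only [mem_image, mem_erase]
          constructor
          · rintro ⟨y, ⟨_, hyτ⟩, rfl⟩
            exact ⟨y, hyτ, rfl⟩
          · rintro ⟨y, hyτ, rfl⟩
            by_cases hyx : y = x
            · exact ⟨u, ⟨fun h => hxu h.symm, hu⟩, by rw [← hpx, hyx]⟩
            · exact ⟨y, ⟨hyx, hyτ⟩, rfl⟩
        rw [h2, hk, card_erase_of_mem hx, hcard] at h1
        omega
      have hzero : ∀ v ∈ τ, v ∉ ({u, w} : Finset V) →
          (-1:ℝ)^((τ.filter fun x => x < v).card) * fF A p k (τ.erase v) = 0 := by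
        intro v hv hvuw
        rw [mem_insert, mem_singleton] at hvuw
        push_neg at hvuw
        have hu' : u ∈ τ.erase v := mem_erase.2 ⟨fun h => hvuw.1 h.symm, hu⟩
        have hw' : w ∈ τ.erase v := mem_erase.2 ⟨fun h => hvuw.2 h.symm, hw⟩
        have h1 := pair_image_card p hu' hw' huw hpuw
        rw [card_erase_of_mem hv, hcard] at h1
        have : fF A p k (τ.erase v) = 0 := by
          rw [fF, if_neg]
          rintro ⟨_, hc2⟩
          omega
        rw [this, mul_zero]
      have hss : ({u, w} : Finset V) ⊆ τ := by
        intro x hx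
        rcases mem_insert.1 hx with h | h
        · exact h ▸ hu
        · exact (mem_singleton.1 h) ▸ hw
      rw [← sum_subset hss hzero, sum_pair huw]
      exact key2 A p τ hcard hk u w hu hw huw hpuw hfib
    · apply sum_eq_zero
      intro v hv
      have h1 : ((τ.erase v).image p).card ≤ (τ.image p).card :=
        card_le_card (image_subset_image (erase_subset _ _))
      have : fF A p k (τ.erase v) = 0 := by
        rw [fF, if_neg]
        rintro ⟨_, hc2⟩
        omega
      rw [this, mul_zero]

lemma exists_good_cycle (X : Finset (Finset V)) (k : ℕ) (hX : IsComplex X)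
    (f0 : Finset V → ℝ) :
    ∃ g : Finset V → ℝ, IsCycle X k g ∧ (∀ σ, σ ∉ faces X k → g σ = 0) ∧
      ∃ h : Finset V → ℝ, ∀ σ ∈ faces X k, g σ = f0 σ - delta X (k-1) h σ := by
  classical
  set E := EuclideanSpace ℝ {x // x ∈ faces X k} with hE
  let Dmap : (Finset V → ℝ) →ₗ[ℝ] E :=
    { toFun := fun h => WithLp.toLp 2 (fun σ : {x // x ∈ faces X k} => delta X (k-1) h σ.1)
      map_add' := by
        intro h₁ h₂
        ext σ
        exact delta_add' X (k-1) h₁ h₂ σ.1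
      map_smul' := by
        intro r h
        ext σ
        show delta X (k-1) (fun ρ => r * h ρ) σ.1 = r * delta X (k-1) h σ.1
        rw [delta_smul'] }
  set B : Submodule ℝ E := LinearMap.range Dmap with hB
  let fE : E := WithLp.toLp 2 (fun σ : {x // x ∈ faces X k} => f0 σ.1)
  obtain ⟨y, hy, z, hz, hsum⟩ := B.exists_add_mem_mem_orthogonal fE
  obtain ⟨h, hh⟩ := hy
  refine ⟨fun σ => if hσ : σ ∈ faces X k then z ⟨σ, hσ⟩ else 0, ?_, ?_, h, ?_⟩
  · intro σ₀
    show (∑ τ ∈ faces X k, incidence τ σ₀ *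
      (if hτ : τ ∈ faces X k then z ⟨τ, hτ⟩ else 0)) = 0
    by_cases hσ₀ : σ₀ ∈ faces X (k-1)
    · have horth := (Submodule.mem_orthogonal B z).1 hz (Dmap (fun ρ => if ρ = σ₀ then 1 else 0))
        (LinearMap.mem_range_self _ _)
      have hinner : (inner ℝ (Dmap (fun ρ => if ρ = σ₀ then 1 else 0)) z : ℝ)
          = ∑ σ ∈ (faces X k).attach, incidence σ.1 σ₀ * z σ := by
        rw [PiLp.inner_apply]
        rw [← Finset.univ_eq_attach]
        apply sum_congr rfl
        intro σ _
        have hD : (Dmap (fun ρ => if ρ = σ₀ then 1 else 0)) σ = incidence σ.1 σ₀ := by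
          show delta X (k-1) (fun ρ => if ρ = σ₀ then 1 else 0) σ.1 = incidence σ.1 σ₀
          rw [delta]
          rw [sum_eq_single σ₀]
          · rw [if_pos rfl, mul_one]
          · intro ρ _ hρ
            rw [if_neg hρ, mul_zero]
          · intro habs
            exact absurd hσ₀ habs
        rw [hD]
        simp [RCLike.inner_apply, mul_comm]
      rw [hinner] at horth
      rw [← sum_attach (faces X k) (fun τ => incidence τ σ₀ *
        (if hτ : τ ∈ faces X k then z ⟨τ, hτ⟩ else 0))]
      rw [← horth]
      apply sum_congr rfl
      intro σ _
      rw [dif_pos σ.2]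
    · apply sum_eq_zero
      intro τ hτ
      obtain ⟨hτX, hτc⟩ := mem_filter.1 hτ
      rw [incidence_zero, zero_mul]
      rintro ⟨hsub, hc⟩
      apply hσ₀
      apply mem_filter.2
      refine ⟨hX τ hτX σ₀ hsub, ?_⟩
      omega
  · intro σ hσ
    simp [dif_neg hσ]
  · intro σ hσ
    simp only [dif_pos hσ]
    have hy' : y ⟨σ, hσ⟩ = delta X (k-1) h σ := by rw [← hh]; rfl
    have hz' : z ⟨σ, hσ⟩ = fE ⟨σ, hσ⟩ - y ⟨σ, hσ⟩ := by
      have hcf := congrArg (fun x : E => x ⟨σ, hσ⟩) hsum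
      change fE ⟨σ, hσ⟩ = y ⟨σ, hσ⟩ + z ⟨σ, hσ⟩ at hcf
      linarith [hcf]
    rw [hz', hy']

end AuxiliaryLemmas

/-- **Theorem 2, bounded-degree form.**  If moreover every `(k-1)`-face of `X` is contained
in at most `C` faces of dimension `k` of the completion `K(X)`, then `C(X) ≤ (k+1)·C` and
consequently `λ(X) ≤ ((k+1)·C/|V|)·h(X)`. -/
theorem spectralGap_le_of_bounded_degree
    {V : Type*} [DecidableEq V] [Fintype V] [LinearOrder V]
    (X : Finset (Finset V)) (k : ℕ)
    (hX : IsComplex X) (hdim : IsDim X k)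
    (hZ : ∃ f : Finset V → ℝ, IsCycle X k f ∧ inn X k f f ≠ 0)
    (hfin : cheeger X k < ⊤)
    (A : Fin (k + 1) → Finset V) (hA : IsPartition A)
    (hmin : cheegerVal X k A = cheeger X k)
    (C : ℕ)
    (hdeg : ∀ σ ∈ faces X k,
      ((faces (completion X k) (k + 1)).filter fun τ => σ ⊆ τ).card ≤ C) :
    Cconst X k A ≤ (k + 1) * C ∧
      (spectralGap X k : EReal) ≤
        ((((k + 1) * C : ℝ) / (Fintype.card V : ℝ) : ℝ) : EReal) * cheeger X k := by
  classical
  set p := pidx A hA with hp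
  set f : Finset V → ℝ := fF A p k with hfdef
  set n : ℕ := Fintype.card V with hn
  have hnpos : 0 < n := by
    obtain ⟨v, hv⟩ := hA.1 ⟨0, Nat.succ_pos k⟩
    rw [hn]
    exact Fintype.card_pos_iff.2 ⟨v⟩
  have hFpar : ¬ (Fpar X k A).card = 0 := by
    have h1 : cheegerVal X k A < ⊤ := by rw [hmin]; exact hfin
    rw [cheegerVal] at h1
    intro hc
    rw [if_pos hc] at h1
    exact lt_irrefl _ h1
  have hfacK : ∀ τ ∈ faces (completion X k) (k+1), τ.card = k+1 ∧ ∀ v ∈ τ, τ.erase v ∈ X := by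
    intro τ hτ
    obtain ⟨hτm, hτc⟩ := mem_filter.1 hτ
    refine ⟨hτc, ?_⟩
    rcases mem_union.1 hτm with hX' | hfil
    · intro v hv
      exact hX τ hX' _ (erase_subset v τ)
    · exact (mem_filter.1 hfil).2.2
  have hfacX : ∀ τ ∈ faces X (k+1), τ.card = k+1 ∧ ∀ v ∈ τ, τ.erase v ∈ X := by
    intro τ hτ
    obtain ⟨hτm, hτc⟩ := mem_filter.1 hτ
    exact ⟨hτc, fun v hv => hX τ hτm _ (erase_subset v τ)⟩
  have hFparK : Fpar X k A ⊆ faces (completion X k) (k+1) := filter_subset _ _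
  -- the degree bound
  have hCle : ∀ σ ∈ faces X k, degPar X k A σ ≤ C := by
    intro σ hσ
    refine le_trans (card_le_card (filter_subset_filter _ hFparK)) (hdeg σ hσ)
  -- first conjunct
  have hC1 : Cconst X k A ≤ (k + 1) * C := by
    apply Finset.sup_le
    intro τ hτ
    obtain ⟨hτc, hτfac⟩ := hfacK τ (hFparK hτ)
    calc ∑ v ∈ τ, degPar X k A (τ.erase v) ≤ ∑ _v ∈ τ, C := by
          apply sum_le_sum
          intro v hv
          exact hCle _ (mem_filter.2 ⟨hτfac v hv, by rw [card_erase_of_mem hv, hτc]; omega⟩)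
      _ = (k+1) * C := by rw [sum_const, hτc, smul_eq_mul]
  refine ⟨hC1, ?_⟩
  -- the projected cochain
  obtain ⟨g, hgcyc, hgzero, h, hgh⟩ := exists_good_cycle X k hX f
  have hdg : ∀ τ : Finset V, τ.card = k+1 → (∀ v ∈ τ, τ.erase v ∈ X) →
      delta X k g τ = if ∀ i, (τ ∩ A i).card = 1 then (-1:ℝ)^(invP p τ) * (n:ℝ) else 0 := by
    intro τ hτc hτfac
    have h0 : delta X k g τ = delta X k (fun σ => f σ - delta X (k-1) h σ) τ := by
      simp only [delta]
      exact sum_congr rfl fun σ hσ => by rw [hgh σ hσ]; rfl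
    rw [h0, delta_sub, dd_zero X k h τ hτc hτfac, sub_zero, hfdef, hp, hn]
    exact delta_fF X A hA τ hτc hτfac
  have hsq1 : ∀ m : ℕ, ((-1:ℝ)^m)*((-1:ℝ)^m) = 1 := by
    intro m; rw [← pow_add, ← two_mul, pow_mul]; norm_num
  -- numerator
  have hN : inn X k (lapUp X k g) g = (n:ℝ)^2 * ((Fset X k A).card : ℝ) := by
    have h1 : inn X k (lapUp X k g) g = inn X (k+1) (delta X k g) (delta X k g) := by
      simp only [lapUp]
      exact inn_bdry X k (delta X k g) g
    rw [h1, inn]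
    have h2 : ∀ τ ∈ faces X (k+1),
        delta X k g τ * delta X k g τ
          = if (∀ i, (τ ∩ A i).card = 1) then (n:ℝ)^2 else 0 := by
      intro τ hτ
      obtain ⟨hτc, hτfac⟩ := hfacX τ hτ
      rw [hdg τ hτc hτfac]
      by_cases hJ : ∀ i, (τ ∩ A i).card = 1
      · rw [if_pos hJ, if_pos hJ]
        have := hsq1 (invP p τ)
        nlinarith [this]
      · rw [if_neg hJ, if_neg hJ, mul_zero]
    rw [sum_congr rfl h2, ← sum_filter, sum_const, nsmul_eq_mul]
    rw [show ((faces X (k+1)).filter fun τ => ∀ i, (τ ∩ A i).card = 1) = Fset X k A from rfl]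
    ring
  -- the key identity
  have hFparmem : ∀ τ ∈ Fpar X k A, (∀ i, (τ ∩ A i).card = 1) := fun τ hτ => (mem_filter.1 hτ).2
  have hid : (n:ℝ) * ((Fpar X k A).card : ℝ)
      = ∑ σ ∈ faces X k, g σ * (∑ τ ∈ Fpar X k A, (-1:ℝ)^(invP p τ) * incidence τ σ) := by
    have lhs : ∑ τ ∈ Fpar X k A, (-1:ℝ)^(invP p τ) * delta X k g τ
        = (n:ℝ) * ((Fpar X k A).card:ℝ) := by
      have hterm : ∀ τ ∈ Fpar X k A, (-1:ℝ)^(invP p τ) * delta X k g τ = (n:ℝ) := by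
        intro τ hτ
        obtain ⟨hτc, hτfac⟩ := hfacK τ (hFparK hτ)
        rw [hdg τ hτc hτfac, if_pos (hFparmem τ hτ), ← mul_assoc, hsq1, one_mul]
      rw [sum_congr rfl hterm, sum_const, nsmul_eq_mul, mul_comm]
    have rhs : ∑ τ ∈ Fpar X k A, (-1:ℝ)^(invP p τ) * delta X k g τ
        = ∑ σ ∈ faces X k, g σ * (∑ τ ∈ Fpar X k A, (-1:ℝ)^(invP p τ) * incidence τ σ) := by
      simp only [delta, mul_sum]
      rw [sum_comm]
      apply sum_congr rfl
      intro σ _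
      exact sum_congr rfl fun τ _ => by ring
    rw [← lhs, rhs]
  -- bound on the coefficients
  have habs : ∀ σ ∈ faces X k,
      |∑ τ ∈ Fpar X k A, (-1:ℝ)^(invP p τ) * incidence τ σ| ≤ (degPar X k A σ : ℝ) := by
    intro σ hσ
    calc |∑ τ ∈ Fpar X k A, (-1:ℝ)^(invP p τ) * incidence τ σ|
        ≤ ∑ τ ∈ Fpar X k A, |(-1:ℝ)^(invP p τ) * incidence τ σ| := abs_sum_le_sum_abs _ _
      _ ≤ ∑ τ ∈ Fpar X k A, (if σ ⊆ τ then (1:ℝ) else 0) := by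
          apply sum_le_sum
          intro τ _
          rw [abs_mul, abs_pow, abs_neg, abs_one, one_pow, one_mul]
          exact abs_incidence_le τ σ
      _ = (((Fpar X k A).filter fun τ => σ ⊆ τ).card : ℝ) := by rw [sum_boole]
      _ = (degPar X k A σ : ℝ) := rfl
  have hgd : (n:ℝ) * ((Fpar X k A).card : ℝ)
      ≤ ∑ σ ∈ faces X k, |g σ| * (degPar X k A σ : ℝ) := by
    calc (n:ℝ) * ((Fpar X k A).card : ℝ)
        ≤ |(n:ℝ) * ((Fpar X k A).card : ℝ)| := le_abs_self _
      _ = |∑ σ ∈ faces X k, g σ * (∑ τ ∈ Fpar X k A, (-1:ℝ)^(invP p τ) * incidence τ σ)| := by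
          rw [hid]
      _ ≤ ∑ σ ∈ faces X k, |g σ * (∑ τ ∈ Fpar X k A, (-1:ℝ)^(invP p τ) * incidence τ σ)| :=
          abs_sum_le_sum_abs _ _
      _ ≤ ∑ σ ∈ faces X k, |g σ| * (degPar X k A σ : ℝ) := by
          apply sum_le_sum
          intro σ hσ
          rw [abs_mul]
          exact mul_le_mul_of_nonneg_left (habs σ hσ) (abs_nonneg _)
  -- Cauchy-Schwarz
  have hQform : inn X k g g = ∑ σ ∈ faces X k, |g σ|^2 := by
    rw [inn]
    exact sum_congr rfl fun σ _ => by rw [sq_abs, pow_two]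
  have hCS : (∑ σ ∈ faces X k, |g σ| * (degPar X k A σ : ℝ))^2
      ≤ (inn X k g g) * (∑ σ ∈ faces X k, ((degPar X k A σ : ℝ))^2) := by
    rw [hQform]
    exact sum_mul_sq_le_sq_mul_sq (faces X k) (fun σ => |g σ|) (fun σ => (degPar X k A σ : ℝ))
  -- bound on the sum of squared degrees
  have hDnat : ∑ σ ∈ faces X k, degPar X k A σ * degPar X k A σ
      ≤ ((k+1) * C) * (Fpar X k A).card := by
    have step1 : ∑ σ ∈ faces X k, degPar X k A σ * degPar X k A σ
        = ∑ τ ∈ Fpar X k A, ∑ σ ∈ faces X k, (if σ ⊆ τ then degPar X k A σ else 0) := by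
      rw [sum_comm]
      apply sum_congr rfl
      intro σ _
      rw [← sum_filter, sum_const, smul_eq_mul]
      rfl
    rw [step1]
    have step2 : ∀ τ ∈ Fpar X k A,
        (∑ σ ∈ faces X k, (if σ ⊆ τ then degPar X k A σ else 0)) ≤ Cconst X k A := by
      intro τ hτ
      obtain ⟨hτc, hτfac⟩ := hfacK τ (hFparK hτ)
      rw [← sum_filter]
      have hsub : (faces X k).filter (fun σ => σ ⊆ τ) ⊆ τ.image (fun v => τ.erase v) := by
        intro σ hσ
        obtain ⟨hσf, hστ⟩ := mem_filter.1 hσ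
        obtain ⟨hσX, hσc⟩ := mem_filter.1 hσf
        obtain ⟨v, hv⟩ : ∃ v, τ \ σ = {v} := by
          rw [← card_eq_one, card_sdiff_of_subset hστ]; omega
        have hvτ : v ∈ τ := by
          have : v ∈ τ \ σ := by rw [hv]; exact mem_singleton_self v
          exact (mem_sdiff.1 this).1
        exact mem_image.2 ⟨v, hvτ, erase_eq_of_sdiff_singleton hστ hv⟩
      calc ∑ σ ∈ (faces X k).filter (fun σ => σ ⊆ τ), degPar X k A σ
          ≤ ∑ σ ∈ τ.image (fun v => τ.erase v), degPar X k A σ :=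
            sum_le_sum_of_subset hsub
        _ = ∑ v ∈ τ, degPar X k A (τ.erase v) := by
            apply sum_image
            intro x hx y hy hxy
            by_contra hne
            exact (notMem_erase x τ) ((show τ.erase x = τ.erase y from hxy) ▸ mem_erase.2 ⟨hne, hx⟩)
        _ ≤ Cconst X k A := Finset.le_sup (f := fun τ => ∑ v ∈ τ, degPar X k A (τ.erase v)) hτ
    calc ∑ τ ∈ Fpar X k A, ∑ σ ∈ faces X k, (if σ ⊆ τ then degPar X k A σ else 0)
        ≤ ∑ _τ ∈ Fpar X k A, Cconst X k A := sum_le_sum step2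
      _ = (Fpar X k A).card * Cconst X k A := by rw [sum_const, smul_eq_mul]
      _ ≤ ((k+1) * C) * (Fpar X k A).card := by
          rw [mul_comm]
          exact Nat.mul_le_mul_right _ hC1
  have hD : (∑ σ ∈ faces X k, ((degPar X k A σ : ℝ))^2)
      ≤ (((k+1) * C : ℕ) : ℝ) * ((Fpar X k A).card : ℝ) := by
    have : ((∑ σ ∈ faces X k, degPar X k A σ * degPar X k A σ : ℕ) : ℝ)
        ≤ ((((k+1) * C) * (Fpar X k A).card : ℕ) : ℝ) := Nat.cast_le.2 hDnat
    push_cast at this ⊢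
    calc ∑ σ ∈ faces X k, ((degPar X k A σ : ℝ))^2
        = ∑ σ ∈ faces X k, (degPar X k A σ : ℝ) * (degPar X k A σ : ℝ) :=
          sum_congr rfl fun σ _ => pow_two _
      _ ≤ _ := this
  have hQ0 : 0 ≤ inn X k g g := sum_nonneg fun σ _ => mul_self_nonneg _
  have hFposR : (0:ℝ) < ((Fpar X k A).card : ℝ) := by
    have := Nat.pos_of_ne_zero hFpar
    exact_mod_cast this
  have hnposR : (0:ℝ) < (n:ℝ) := by exact_mod_cast hnpos
  have hgd0 : (0:ℝ) ≤ (n:ℝ) * ((Fpar X k A).card : ℝ) := by positivity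
  have hmaster : ((n:ℝ) * ((Fpar X k A).card : ℝ))^2
      ≤ inn X k g g * ((((k+1) * C : ℕ) : ℝ) * ((Fpar X k A).card : ℝ)) := by
    calc ((n:ℝ) * ((Fpar X k A).card : ℝ))^2
        ≤ (∑ σ ∈ faces X k, |g σ| * (degPar X k A σ : ℝ))^2 := by
          apply pow_le_pow_left₀ hgd0 hgd
      _ ≤ inn X k g g * (∑ σ ∈ faces X k, ((degPar X k A σ : ℝ))^2) := hCS
      _ ≤ inn X k g g * ((((k+1) * C : ℕ) : ℝ) * ((Fpar X k A).card : ℝ)) :=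
          mul_le_mul_of_nonneg_left hD hQ0
  have hkC : (0:ℝ) < (((k+1) * C : ℕ) : ℝ) := by
    rcases Nat.eq_zero_or_pos ((k+1) * C) with h0 | hpos
    · exfalso
      rw [h0] at hmaster
      push_cast at hmaster
      nlinarith [mul_pos hnposR hFposR, hmaster]
    · exact_mod_cast hpos
  have hL : (n:ℝ)^2 * ((Fpar X k A).card : ℝ) / (((k+1) * C : ℕ) : ℝ) ≤ inn X k g g := by
    rw [div_le_iff₀ hkC]
    have h2 : ((n:ℝ)^2 * ((Fpar X k A).card : ℝ)) * ((Fpar X k A).card : ℝ)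
        ≤ (inn X k g g * (((k+1) * C : ℕ) : ℝ)) * ((Fpar X k A).card : ℝ) := by
      nlinarith [hmaster]
    exact le_of_mul_le_mul_right h2 hFposR
  have hLpos : (0:ℝ) < (n:ℝ)^2 * ((Fpar X k A).card : ℝ) / (((k+1) * C : ℕ) : ℝ) := by
    positivity
  have hQpos : 0 < inn X k g g := lt_of_lt_of_le hLpos hL
  -- spectral gap bound
  have hbdd : BddBelow {r : ℝ | ∃ f : Finset V → ℝ, IsCycle X k f ∧ inn X k f f ≠ 0 ∧
      r = inn X k (lapUp X k f) f / inn X k f f} := by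
    refine ⟨0, ?_⟩
    rintro r ⟨f', hcyc', hne', rfl⟩
    have hnum : 0 ≤ inn X k (lapUp X k f') f' := by
      have h1 : inn X k (lapUp X k f') f' = inn X (k+1) (delta X k f') (delta X k f') := by
        simp only [lapUp]
        exact inn_bdry X k (delta X k f') f'
      rw [h1, inn]
      exact sum_nonneg fun τ _ => mul_self_nonneg _
    have hden : 0 ≤ inn X k f' f' := sum_nonneg fun σ _ => mul_self_nonneg _
    exact div_nonneg hnum hden
  have hmem : inn X k (lapUp X k g) g / inn X k g g ∈
      {r : ℝ | ∃ f : Finset V → ℝ, IsCycle X k f ∧ inn X k f f ≠ 0 ∧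
        r = inn X k (lapUp X k f) f / inn X k f f} :=
    ⟨g, hgcyc, ne_of_gt hQpos, rfl⟩
  have hsg : spectralGap X k ≤ inn X k (lapUp X k g) g / inn X k g g := csInf_le hbdd hmem
  -- final real estimate
  have hNnn : (0:ℝ) ≤ (n:ℝ)^2 * ((Fset X k A).card : ℝ) := by positivity
  have hrstar : inn X k (lapUp X k g) g / inn X k g g
      ≤ (((k + 1) * C : ℝ) / (n : ℝ)) *
        ((n * (Fset X k A).card : ℝ) / ((Fpar X k A).card : ℝ)) := by
    rw [hN]
    have h1 : (n:ℝ)^2 * ((Fset X k A).card : ℝ) / inn X k g g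
        ≤ (n:ℝ)^2 * ((Fset X k A).card : ℝ) /
          ((n:ℝ)^2 * ((Fpar X k A).card : ℝ) / (((k+1) * C : ℕ) : ℝ)) :=
      div_le_div_of_nonneg_left hNnn hLpos hL
    refine le_trans h1 (le_of_eq ?_)
    have hkCne : (((k+1) * C : ℕ) : ℝ) ≠ 0 := ne_of_gt hkC
    have hnne : (n:ℝ) ≠ 0 := ne_of_gt hnposR
    have hFne : ((Fpar X k A).card : ℝ) ≠ 0 := ne_of_gt hFposR
    field_simp
    push_cast
    ring
  -- EReal conclusion
  rw [← hmin, cheegerVal, if_neg hFpar]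
  have hfinal : spectralGap X k ≤ (((k + 1) * C : ℝ) / (Fintype.card V : ℝ)) *
      ((Fintype.card V * (Fset X k A).card : ℝ) / ((Fpar X k A).card : ℝ)) := by
    rw [← hn]
    exact le_trans hsg hrstar
  calc (spectralGap X k : EReal)
      ≤ ((((k + 1) * C : ℝ) / (Fintype.card V : ℝ)) *
        ((Fintype.card V * (Fset X k A).card : ℝ) / ((Fpar X k A).card : ℝ)) : ℝ) := by
        exact_mod_cast hfinal
    _ = ((((k + 1) * C : ℝ) / (Fintype.card V : ℝ) : ℝ) : EReal) *
        (((Fintype.card V * (Fset X k A).card : ℝ) / ((Fpar X k A).card : ℝ) : ℝ) : EReal) := by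
        rw [← EReal.coe_mul]


end HigherCheeger
end

section
/- Let X be any k-dimensional simplicial complex on a finite vertex set V with Z_{k−1}(X;ℝ) ≠ {0}. Then λ(X) ≤ h'(X). -/
open Finset

namespace HigherCheeger

variable {V : Type*} [DecidableEq V] [Fintype V] [LinearOrder V]

/-! ### Auxiliary machinery for the proof -/

open RealInnerProductSpace in
lemma euclid_inner (x y : EuclideanSpace ℝ (Finset V)) :
    ⟪x, y⟫ = ∑ σ : Finset V, x σ * y σ := by
  rw [PiLp.inner_apply]; simp [mul_comm]

/-- All subsets of `V` of cardinality `c`. -/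
def allF (V : Type*) [DecidableEq V] [Fintype V] (c : ℕ) : Finset (Finset V) :=
  Finset.univ.filter fun σ => σ.card = c

lemma mem_allF {c : ℕ} {σ : Finset V} : σ ∈ allF V c ↔ σ.card = c := by
  simp [allF]

lemma faces_subset_allF (X : Finset (Finset V)) (c : ℕ) : faces X c ⊆ allF V c :=
  fun σ hσ => mem_allF.mpr (mem_filter.mp hσ).2

lemma incidence_ne_zero {τ σ : Finset V} (h : incidence τ σ ≠ 0) :
    σ ⊆ τ ∧ σ.card + 1 = τ.card := by
  by_contra hc; exact h (if_neg hc)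

lemma exists_eq_insert_of {σ τ : Finset V} (h1 : σ ⊆ τ) (h2 : σ.card + 1 = τ.card) :
    ∃ v, v ∉ σ ∧ τ = insert v σ := by
  have h3 : (τ \ σ).card = 1 := by rw [card_sdiff_of_subset h1]; omega
  obtain ⟨v, hv⟩ := card_eq_one.mp h3
  have hv1 : v ∈ τ ∧ v ∉ σ := by
    have : v ∈ τ \ σ := hv ▸ mem_singleton_self v
    exact ⟨(mem_sdiff.mp this).1, (mem_sdiff.mp this).2⟩
  refine ⟨v, hv1.2, ?_⟩
  refine (eq_of_subset_of_card_le ?_ ?_).symm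
  · intro x hx
    rcases mem_insert.mp hx with h | h
    · exact h ▸ hv1.1
    · exact h1 h
  · rw [card_insert_of_notMem hv1.2]; omega

lemma incidence_insert {σ : Finset V} {v : V} (hv : v ∉ σ) :
    incidence (insert v σ) σ = (-1 : ℝ) ^ (σ.filter fun w => w < v).card := by
  have hcard : σ.card + 1 = (insert v σ).card := by rw [card_insert_of_notMem hv]
  rw [incidence, if_pos ⟨subset_insert _ _, hcard⟩]
  have hd : insert v σ \ σ = {v} := by
    ext x
    simp only [mem_sdiff, mem_insert, mem_singleton]
    constructor
    · rintro ⟨h1 | h1, h2⟩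
      · exact h1
      · exact absurd h1 h2
    · rintro rfl; exact ⟨Or.inl rfl, hv⟩
  rw [hd, sum_singleton]
  congr 1
  rw [filter_insert, if_neg (lt_irrefl v)]

lemma cast2_eq_one_iff (m : ℕ) : ((m : ZMod 2) = 1) ↔ m % 2 = 1 := by
  conv_lhs => rw [← ZMod.natCast_mod m 2]
  rcases Nat.mod_two_eq_zero_or_one m with h | h <;> rw [h] <;> decide

lemma cast2_eq_zero_iff (m : ℕ) : ((m : ZMod 2) = 0) ↔ m % 2 = 0 := by
  conv_lhs => rw [← ZMod.natCast_mod m 2]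
  rcases Nat.mod_two_eq_zero_or_one m with h | h <;> rw [h] <;> decide

lemma neg_one_pow_eq_neg_of {a b : ℕ} (h : (a + b) % 2 = 1) :
    (-1 : ℝ) ^ a = -(-1 : ℝ) ^ b := by
  rcases Nat.even_or_odd a with ha | ha <;> rcases Nat.even_or_odd b with hb | hb
  · exact absurd (Nat.even_iff.mp (ha.add hb)) (by omega)
  · rw [ha.neg_one_pow, hb.neg_one_pow]; norm_num
  · rw [ha.neg_one_pow, hb.neg_one_pow]
  · exact absurd (Nat.even_iff.mp (ha.add_odd hb)) (by omega)

/-- Number of "inversions" of `σ` with respect to the labelling `p`. -/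
def invCount {k : ℕ} (p : V → Fin k) (σ : Finset V) : ℕ :=
  ∑ y ∈ σ, (σ.filter fun x => y < x ∧ p x < p y).card

lemma invCount_insert {k : ℕ} (p : V → Fin k) {s : Finset V} {w : V} (hw : w ∉ s) :
    invCount p (insert w s) = invCount p s
      + ((s.filter fun x => w < x ∧ p x < p w).card
        + (s.filter fun x => x < w ∧ p w < p x).card) := by
  rw [invCount, sum_insert hw]
  have h1 : ((insert w s).filter fun x => w < x ∧ p x < p w).card
      = (s.filter fun x => w < x ∧ p x < p w).card := by
    rw [filter_insert, if_neg (by simp)]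
  have h2 : ∀ y ∈ s, ((insert w s).filter fun x => y < x ∧ p x < p y).card
      = (s.filter fun x => y < x ∧ p x < p y).card + (if y < w ∧ p w < p y then 1 else 0) := by
    intro y _
    rw [filter_insert]
    split_ifs with h
    · rw [card_insert_of_notMem (fun hc => hw (mem_of_mem_filter _ hc))]
    · rw [add_zero]
  rw [h1, Finset.sum_congr rfl h2, Finset.sum_add_distrib, ← Finset.card_filter]
  rw [invCount]
  omega

lemma sign_N {k : ℕ} (p : V → Fin k) (τ : Finset V) (u w : V)
    (hu : u ∈ τ) (hw : w ∈ τ) (huw : u ≠ w) (hpuw : p u = p w)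
    (hother : ∀ x ∈ τ, x ≠ u → x ≠ w → p x ≠ p u) :
    incidence τ (τ.erase u) * (-1 : ℝ) ^ invCount p (τ.erase u)
      = -(incidence τ (τ.erase w) * (-1 : ℝ) ^ invCount p (τ.erase w)) := by
  set ρ := (τ.erase u).erase w with hρ
  have hwρ : w ∉ ρ := notMem_erase _ _
  have huρ : u ∉ ρ := fun h => (mem_erase.mp (mem_of_mem_erase h)).1 rfl
  have heu : τ.erase u = insert w ρ := (insert_erase (mem_erase.mpr ⟨Ne.symm huw, hw⟩)).symm
  have hcomm : (τ.erase w).erase u = ρ := by rw [hρ, erase_right_comm]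
  have hew : τ.erase w = insert u ρ := by
    rw [← hcomm]; exact (insert_erase (mem_erase.mpr ⟨huw, hu⟩)).symm
  have hiu : incidence τ (τ.erase u) = (-1:ℝ) ^ ((τ.erase u).filter fun x => x < u).card := by
    rw [← incidence_insert (notMem_erase u τ), insert_erase hu]
  have hiw : incidence τ (τ.erase w) = (-1:ℝ) ^ ((τ.erase w).filter fun x => x < w).card := by
    rw [← incidence_insert (notMem_erase w τ), insert_erase hw]
  rw [hiu, hiw, ← pow_add, ← pow_add]
  apply neg_one_pow_eq_neg_of
  rw [heu, hew, invCount_insert (p := p) hwρ, invCount_insert (p := p) huρ]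
  have ha1 : ((insert w ρ).filter fun x => x < u).card
      = (ρ.filter fun x => x < u).card + (if w < u then 1 else 0) := by
    rw [filter_insert]
    split_ifs with h
    · rw [card_insert_of_notMem (fun hc => hwρ (mem_of_mem_filter _ hc))]
    · rw [add_zero]
  have ha2 : ((insert u ρ).filter fun x => x < w).card
      = (ρ.filter fun x => x < w).card + (if u < w then 1 else 0) := by
    rw [filter_insert]
    split_ifs with h
    · rw [card_insert_of_notMem (fun hc => huρ (mem_of_mem_filter _ hc))]
    · rw [add_zero]
  rw [ha1, ha2]
  have hite : (if w < u then 1 else 0) + (if u < w then 1 else 0) = 1 := by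
    rcases huw.lt_or_gt with h | h
    · rw [if_neg (asymm h), if_pos h]
    · rw [if_pos h, if_neg (asymm h)]
  have key : ((ρ.filter fun x => x < u).card + (ρ.filter fun x => x < w).card
      + ((ρ.filter fun x => w < x ∧ p x < p w).card + (ρ.filter fun x => x < w ∧ p w < p x).card)
      + ((ρ.filter fun x => u < x ∧ p x < p u).card
        + (ρ.filter fun x => x < u ∧ p u < p x).card)) % 2 = 0 := by
    rw [← cast2_eq_zero_iff]
    push_cast
    simp only [card_filter]
    push_cast
    rw [← Finset.sum_add_distrib, ← Finset.sum_add_distrib, ← Finset.sum_add_distrib,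
      ← Finset.sum_add_distrib, ← Finset.sum_add_distrib]
    apply Finset.sum_eq_zero
    intro x hx
    have hxw : x ≠ w := (mem_erase.mp hx).1
    have hx' : x ∈ τ.erase u := mem_of_mem_erase hx
    have hxu : x ≠ u := (mem_erase.mp hx').1
    have hxτ : x ∈ τ := mem_of_mem_erase hx'
    have hpxu : p x ≠ p u := hother x hxτ hxu hxw
    have hpxw : p x ≠ p w := by rw [← hpuw]; exact hpxu
    rcases lt_trichotomy x u with h1 | h1 | h1
    · have hn1 : ¬ u < x := asymm h1
      rcases lt_trichotomy x w with h2 | h2 | h2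
      · have hn2 : ¬ w < x := asymm h2
        by_cases hpp : p u < p x
        · have hpw : p w < p x := hpuw ▸ hpp
          simp [h1, h2, hn1, hn2, hpp, hpw, asymm hpp, asymm hpw]
          try decide
        · have hq1 : ¬ p w < p x := by rw [← hpuw]; exact hpp
          have hq2 : p x < p u := lt_of_le_of_ne (not_lt.mp hpp) hpxu
          have hq3 : p x < p w := hpuw ▸ hq2
          simp [h1, h2, hn1, hn2, hpp, hq1, hq2, hq3]
          try decide
      · exact absurd h2 hxw
      · -- w < x < u
        have hn2 : ¬ x < w := asymm h2
        by_cases hpp : p x < p w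
        · have hq : ¬ p w < p x := asymm hpp
          have hq2 : ¬ p u < p x := by rw [hpuw]; exact hq
          simp [h1, h2, hn1, hn2, hpp, hq, hq2]
          try decide
        · have hq : p w < p x := lt_of_le_of_ne (not_lt.mp hpp) (Ne.symm hpxw)
          have hq2 : p u < p x := hpuw ▸ hq
          have hq3 : ¬ p x < p u := asymm hq2
          simp [h1, h2, hn1, hn2, hpp, hq, hq2, hq3]
          try decide
    · exact absurd h1 hxu
    · have hn1 : ¬ x < u := asymm h1
      rcases lt_trichotomy x w with h2 | h2 | h2
      · -- u < x < w
        have hn2 : ¬ w < x := asymm h2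
        by_cases hpp : p x < p u
        · have hq : ¬ p u < p x := asymm hpp
          have hq2 : ¬ p w < p x := by rw [← hpuw]; exact hq
          simp [h1, h2, hn1, hn2, hpp, hq, hq2]
          try decide
        · have hq : p u < p x := lt_of_le_of_ne (not_lt.mp hpp) (Ne.symm hpxu)
          have hq2 : p w < p x := hpuw ▸ hq
          have hq3 : ¬ p x < p w := asymm hq2
          simp [h1, h2, hn1, hn2, hpp, hq, hq2, hq3]
          try decide
      · exact absurd h2 hxw
      · have hn2 : ¬ x < w := asymm h2
        by_cases hpp : p x < p u
        · have hq : p x < p w := hpuw ▸ hpp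
          simp [h1, h2, hn1, hn2, hpp, hq, asymm hpp, asymm hq]
          try decide
        · have hq : ¬ p x < p w := by rw [← hpuw]; exact hpp
          simp [h1, h2, hn1, hn2, hpp, hq]
          try decide
  omega


lemma incidence_cycle (ρ : Finset V) (u w : V) (hu : u ∉ ρ) (hw : w ∉ ρ) (huw : u ≠ w) :
    incidence (insert u (insert w ρ)) (insert w ρ) * incidence (insert w ρ) ρ
      + incidence (insert u (insert w ρ)) (insert u ρ) * incidence (insert u ρ) ρ = 0 := by
  have hwiu : w ∉ insert u ρ := by simp [mem_insert, Ne.symm huw, hw]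
  have huiw : u ∉ insert w ρ := by simp [mem_insert, huw, hu]
  have e1 : incidence (insert u (insert w ρ)) (insert w ρ)
      = (-1:ℝ) ^ ((insert w ρ).filter fun x => x < u).card := incidence_insert huiw
  have e2 : incidence (insert u (insert w ρ)) (insert u ρ)
      = (-1:ℝ) ^ ((insert u ρ).filter fun x => x < w).card := by
    rw [Finset.insert_comm]
    exact incidence_insert hwiu
  have e3 : incidence (insert u ρ) ρ = (-1:ℝ) ^ (ρ.filter fun x => x < u).card :=
    incidence_insert hu
  have e4 : incidence (insert w ρ) ρ = (-1:ℝ) ^ (ρ.filter fun x => x < w).card :=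
    incidence_insert hw
  have f1 : ((insert w ρ).filter fun x => x < u).card
      = (ρ.filter fun x => x < u).card + if w < u then 1 else 0 := by
    rw [filter_insert]
    split_ifs with h
    · rw [card_insert_of_notMem (fun hc => hw (mem_of_mem_filter _ hc))]
    · rw [add_zero]
  have f2 : ((insert u ρ).filter fun x => x < w).card
      = (ρ.filter fun x => x < w).card + if u < w then 1 else 0 := by
    rw [filter_insert]
    split_ifs with h
    · rw [card_insert_of_notMem (fun hc => hu (mem_of_mem_filter _ hc))]
    · rw [add_zero]
  rw [e1, e2, e3, e4, f1, f2]
  rcases huw.lt_or_gt with h | h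
  · rw [if_neg (asymm h), if_pos h, add_zero, pow_succ]
    ring
  · rw [if_pos h, if_neg (asymm h), add_zero, pow_succ]
    ring

lemma incidence_offdiag (ρ : Finset V) (u w : V) (hu : u ∉ ρ) (hw : w ∉ ρ) (huw : u ≠ w) :
    incidence (insert u (insert w ρ)) (insert u ρ) * incidence (insert u (insert w ρ)) (insert w ρ)
      + incidence (insert u ρ) ρ * incidence (insert w ρ) ρ = 0 := by
  have hwiu : w ∉ insert u ρ := by simp [mem_insert, Ne.symm huw, hw]
  have huiw : u ∉ insert w ρ := by simp [mem_insert, huw, hu]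
  have e1 : incidence (insert u (insert w ρ)) (insert w ρ)
      = (-1:ℝ) ^ ((insert w ρ).filter fun x => x < u).card := incidence_insert huiw
  have e2 : incidence (insert u (insert w ρ)) (insert u ρ)
      = (-1:ℝ) ^ ((insert u ρ).filter fun x => x < w).card := by
    rw [Finset.insert_comm]
    exact incidence_insert hwiu
  have e3 : incidence (insert u ρ) ρ = (-1:ℝ) ^ (ρ.filter fun x => x < u).card :=
    incidence_insert hu
  have e4 : incidence (insert w ρ) ρ = (-1:ℝ) ^ (ρ.filter fun x => x < w).card :=
    incidence_insert hw
  have f1 : ((insert w ρ).filter fun x => x < u).card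
      = (ρ.filter fun x => x < u).card + if w < u then 1 else 0 := by
    rw [filter_insert]
    split_ifs with h
    · rw [card_insert_of_notMem (fun hc => hw (mem_of_mem_filter _ hc))]
    · rw [add_zero]
  have f2 : ((insert u ρ).filter fun x => x < w).card
      = (ρ.filter fun x => x < w).card + if u < w then 1 else 0 := by
    rw [filter_insert]
    split_ifs with h
    · rw [card_insert_of_notMem (fun hc => hu (mem_of_mem_filter _ hc))]
    · rw [add_zero]
  rw [e1, e2, e3, e4, f1, f2]
  rcases huw.lt_or_gt with h | h
  · rw [if_neg (asymm h), if_pos h, add_zero, pow_succ]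
    ring
  · rw [if_pos h, if_neg (asymm h), add_zero, pow_succ]
    ring

lemma incidence_offdiag' (ρ σ σ' τ : Finset V) (u w : V) (hu : u ∉ ρ) (hw : w ∉ ρ)
    (huw : u ≠ w) (h1 : σ = insert u ρ) (h2 : σ' = insert w ρ)
    (h3 : τ = insert u (insert w ρ)) :
    incidence τ σ * incidence τ σ' + incidence σ ρ * incidence σ' ρ = 0 := by
  subst h1; subst h2; subst h3
  exact incidence_offdiag ρ u w hu hw huw

lemma delta_delta_eq_zero (X : Finset (Finset V)) (hX : IsComplex X) (c : ℕ) (h : Finset V → ℝ)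
    (τ : Finset V) (hτ : τ.card = c + 2) (hfac : ∀ v ∈ τ, τ.erase v ∈ X) :
    delta X (c+1) (delta X c h) τ = 0 := by
  show ∑ σ ∈ faces X (c+1), incidence τ σ * ∑ ρ ∈ faces X c, incidence σ ρ * h ρ = 0
  have step : ∑ σ ∈ faces X (c+1), incidence τ σ * ∑ ρ ∈ faces X c, incidence σ ρ * h ρ
      = ∑ ρ ∈ faces X c, (∑ σ ∈ faces X (c+1), incidence τ σ * incidence σ ρ) * h ρ := by
    rw [Finset.sum_congr rfl fun σ _ => Finset.mul_sum _ _ _, Finset.sum_comm]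
    apply Finset.sum_congr rfl; intro ρ _
    rw [sum_mul]
    apply Finset.sum_congr rfl; intro σ _
    ring
  rw [step]
  apply Finset.sum_eq_zero
  intro ρ hρ
  suffices hS : (∑ σ ∈ faces X (c+1), incidence τ σ * incidence σ ρ) = 0 by rw [hS, zero_mul]
  by_cases hρτ : ρ ⊆ τ
  · have hρc : ρ.card = c := (mem_filter.mp hρ).2
    have hcard2 : (τ \ ρ).card = 2 := by rw [card_sdiff_of_subset hρτ]; omega
    obtain ⟨u, w, huw, hsd⟩ := card_eq_two.mp hcard2
    have hu' : u ∈ τ \ ρ := by rw [hsd]; exact mem_insert_self _ _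
    have hw' : w ∈ τ \ ρ := by rw [hsd]; exact mem_insert.mpr (Or.inr (mem_singleton_self _))
    have huτ : u ∈ τ := (mem_sdiff.mp hu').1
    have hwτ : w ∈ τ := (mem_sdiff.mp hw').1
    have huρ : u ∉ ρ := (mem_sdiff.mp hu').2
    have hwρ : w ∉ ρ := (mem_sdiff.mp hw').2
    have hτeq : τ = insert u (insert w ρ) := by
      ext x
      simp only [mem_insert]
      constructor
      · intro hx
        by_cases hxρ : x ∈ ρ
        · tauto
        · have : x ∈ τ \ ρ := mem_sdiff.mpr ⟨hx, hxρ⟩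
          rw [hsd] at this
          simp only [mem_insert, mem_singleton] at this
          tauto
      · rintro (rfl | rfl | hx)
        · exact huτ
        · exact hwτ
        · exact hρτ hx
    have huiw : u ∉ insert w ρ := by simp [mem_insert, huw, huρ]
    have hwiu : w ∉ insert u ρ := by simp [mem_insert, Ne.symm huw, hwρ]
    have hiw : insert w ρ = τ.erase u := by rw [hτeq, erase_insert huiw]
    have hiu : insert u ρ = τ.erase w := by
      rw [hτeq, Finset.insert_comm, erase_insert hwiu]
    have hmem1 : insert w ρ ∈ faces X (c+1) := by
      refine mem_filter.mpr ⟨?_, ?_⟩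
      · rw [hiw]; exact hfac u huτ
      · rw [card_insert_of_notMem hwρ, hρc]
    have hmem2 : insert u ρ ∈ faces X (c+1) := by
      refine mem_filter.mpr ⟨?_, ?_⟩
      · rw [hiu]; exact hfac w hwτ
      · rw [card_insert_of_notMem huρ, hρc]
    have hpairne : insert w ρ ≠ insert u ρ := by
      intro hcontra
      have : w ∈ insert u ρ := hcontra ▸ mem_insert_self w ρ
      simp only [mem_insert] at this
      tauto
    have hred : ∑ σ ∈ faces X (c+1), incidence τ σ * incidence σ ρ
        = ∑ σ ∈ ({insert w ρ, insert u ρ} : Finset (Finset V)),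
            incidence τ σ * incidence σ ρ := by
      symm
      apply Finset.sum_subset
      · intro s hs
        rcases mem_insert.mp hs with rfl | hs'
        · exact hmem1
        · rw [mem_singleton] at hs'; subst hs'; exact hmem2
      · intro s hs hsn
        by_cases h1 : incidence τ s = 0
        · rw [h1, zero_mul]
        by_cases h2 : incidence s ρ = 0
        · rw [h2, mul_zero]
        exfalso
        obtain ⟨hsub1, hc1⟩ := incidence_ne_zero h1
        obtain ⟨hsub2, hc2⟩ := incidence_ne_zero h2
        obtain ⟨x, hxρ, hxe⟩ := exists_eq_insert_of hsub2 hc2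
        have hxτ : x ∈ τ := hsub1 (hxe ▸ mem_insert_self x ρ)
        have hxd : x ∈ τ \ ρ := mem_sdiff.mpr ⟨hxτ, hxρ⟩
        rw [hsd] at hxd
        simp only [mem_insert, mem_singleton] at hxd
        rcases hxd with rfl | rfl
        · exact hsn (by rw [hxe]; exact mem_insert.mpr (Or.inr (mem_singleton_self _)))
        · exact hsn (by rw [hxe]; exact mem_insert_self _ _)
    rw [hred, sum_pair hpairne, hτeq]
    exact incidence_cycle ρ u w huρ hwρ huw
  · apply Finset.sum_eq_zero
    intro s _
    by_cases h1 : incidence τ s = 0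
    · rw [h1, zero_mul]
    by_cases h2 : incidence s ρ = 0
    · rw [h2, mul_zero]
    exact absurd ((incidence_ne_zero h2).1.trans (incidence_ne_zero h1).1) hρτ

lemma sum_incidence_sq_up (σ : Finset V) (k : ℕ) (hσ : σ.card = k) :
    ∑ τ ∈ allF V (k+1), incidence τ σ * incidence τ σ = ((Fintype.card V - k : ℕ) : ℝ) := by
  have h1 : ∀ τ ∈ allF V (k+1), incidence τ σ * incidence τ σ
      = if σ ⊆ τ then (1:ℝ) else 0 := by
    intro τ hτ
    by_cases hs : σ ⊆ τ
    · rw [if_pos hs]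
      obtain ⟨v, hv, rfl⟩ := exists_eq_insert_of hs (by rw [mem_allF] at hτ; omega)
      rw [incidence_insert hv, ← pow_add]
      exact Even.neg_one_pow ⟨_, rfl⟩
    · rw [if_neg hs]
      have : incidence τ σ = 0 := if_neg (fun hc => hs hc.1)
      rw [this, zero_mul]
  rw [Finset.sum_congr rfl h1, Finset.sum_boole]
  have hbij : (Finset.univ \ σ).card = ((allF V (k+1)).filter fun τ => σ ⊆ τ).card := by
    apply Finset.card_bij (fun v _ => insert v σ)
    · intro v hv
      refine mem_filter.mpr ⟨mem_allF.mpr ?_, subset_insert _ _⟩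
      rw [card_insert_of_notMem (mem_sdiff.mp hv).2, hσ]
    · intro a₁ h₁ a₂ h₂ heq
      have : a₁ ∈ insert a₂ σ := heq ▸ mem_insert_self a₁ σ
      rcases mem_insert.mp this with h | h
      · exact h
      · exact absurd h (mem_sdiff.mp h₁).2
    · intro τ hτ
      obtain ⟨hτa, hτs⟩ := mem_filter.mp hτ
      obtain ⟨v, hv, rfl⟩ := exists_eq_insert_of hτs (by rw [mem_allF] at hτa; omega)
      exact ⟨v, mem_sdiff.mpr ⟨mem_univ v, hv⟩, rfl⟩
  rw [← hbij, card_sdiff_of_subset (subset_univ σ), card_univ, hσ]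

lemma sum_incidence_sq_down (σ : Finset V) (k : ℕ) (hσ : σ.card = k) (hk : 1 ≤ k) :
    ∑ ρ ∈ allF V (k-1), incidence σ ρ * incidence σ ρ = (k : ℝ) := by
  have h1 : ∀ ρ ∈ allF V (k-1), incidence σ ρ * incidence σ ρ
      = if ρ ⊆ σ then (1:ℝ) else 0 := by
    intro ρ hρ
    by_cases hs : ρ ⊆ σ
    · rw [if_pos hs]
      obtain ⟨v, hv, rfl⟩ := exists_eq_insert_of hs (by rw [mem_allF] at hρ; omega)
      rw [incidence_insert hv, ← pow_add]
      exact Even.neg_one_pow ⟨_, rfl⟩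
    · rw [if_neg hs]
      have : incidence σ ρ = 0 := if_neg (fun hc => hs hc.1)
      rw [this, zero_mul]
  rw [Finset.sum_congr rfl h1, Finset.sum_boole]
  have hbij : σ.card = ((allF V (k-1)).filter fun ρ => ρ ⊆ σ).card := by
    apply Finset.card_bij (fun v _ => σ.erase v)
    · intro v hv
      refine mem_filter.mpr ⟨mem_allF.mpr ?_, erase_subset _ _⟩
      rw [card_erase_of_mem hv, hσ]
    · intro a₁ h₁ a₂ h₂ heq
      by_contra hne
      have : a₁ ∈ σ.erase a₂ := mem_erase.mpr ⟨hne, h₁⟩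
      rw [← heq] at this
      exact (mem_erase.mp this).1 rfl
    · intro ρ hρ
      obtain ⟨hρa, hρs⟩ := mem_filter.mp hρ
      obtain ⟨v, hv, hve⟩ := exists_eq_insert_of hρs (by rw [mem_allF] at hρa; omega)
      refine ⟨v, hve ▸ mem_insert_self v ρ, ?_⟩
      rw [hve, erase_insert hv]
  rw [← hbij, hσ]

lemma sum_incidence_offdiag (σ σ' : Finset V) (k : ℕ) (hσ : σ.card = k) (hσ' : σ'.card = k)
    (hne : σ ≠ σ') (hk : 1 ≤ k) :
    ∑ τ ∈ allF V (k+1), incidence τ σ * incidence τ σ'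
      + ∑ ρ ∈ allF V (k-1), incidence σ ρ * incidence σ' ρ = 0 := by
  have hle : (σ ∩ σ').card ≤ k := le_trans (card_le_card inter_subset_left) (le_of_eq hσ)
  have hnek : (σ ∩ σ').card ≠ k := by
    intro h
    have h1 : σ ∩ σ' = σ := eq_of_subset_of_card_le inter_subset_left (by omega)
    have h2 : σ ∩ σ' = σ' := eq_of_subset_of_card_le inter_subset_right (by omega)
    exact hne (h1.symm.trans h2)
  by_cases hint : (σ ∩ σ').card + 1 = k
  · obtain ⟨u, hu, hσe⟩ := exists_eq_insert_of (inter_subset_left : σ ∩ σ' ⊆ σ) (by omega)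
    obtain ⟨w, hw, hσ'e⟩ := exists_eq_insert_of (inter_subset_right : σ ∩ σ' ⊆ σ') (by omega)
    have huw : u ≠ w := by
      rintro rfl
      have h1 : u ∈ σ := hσe ▸ mem_insert_self _ _
      have h2 : u ∈ σ' := hσ'e ▸ mem_insert_self _ _
      exact hu (mem_inter.mpr ⟨h1, h2⟩)
    have hτ₀ : σ ∪ σ' = insert u (insert w (σ ∩ σ')) := by
      ext x
      simp only [mem_union, mem_insert, mem_inter]
      constructor
      · rintro (hx | hx)
        · rw [hσe] at hx
          rcases mem_insert.mp hx with rfl | hx2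
          · exact Or.inl rfl
          · exact Or.inr (Or.inr (mem_inter.mp hx2))
        · rw [hσ'e] at hx
          rcases mem_insert.mp hx with rfl | hx2
          · exact Or.inr (Or.inl rfl)
          · exact Or.inr (Or.inr (mem_inter.mp hx2))
      · rintro (rfl | rfl | ⟨h1, h2⟩)
        · exact Or.inl (hσe ▸ mem_insert_self _ _)
        · exact Or.inr (hσ'e ▸ mem_insert_self _ _)
        · exact Or.inl h1
    have hwiu : w ∉ insert u (σ ∩ σ') := by simp [mem_insert, Ne.symm huw, hw]
    have hτcard : (insert u (insert w (σ ∩ σ'))).card = k + 1 := by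
      have huiw : u ∉ insert w (σ ∩ σ') := by simp [mem_insert, huw, hu]
      rw [card_insert_of_notMem huiw, card_insert_of_notMem hw]
      omega
    have hsum1 : ∑ τ ∈ allF V (k+1), incidence τ σ * incidence τ σ'
        = incidence (insert u (insert w (σ ∩ σ'))) σ
          * incidence (insert u (insert w (σ ∩ σ'))) σ' := by
      apply Finset.sum_eq_single_of_mem _ (mem_allF.mpr hτcard)
      intro τ hτ hτne
      by_cases h1 : incidence τ σ = 0
      · rw [h1, zero_mul]
      by_cases h2 : incidence τ σ' = 0
      · rw [h2, mul_zero]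
      exfalso
      apply hτne
      have hsub : σ ∪ σ' ⊆ τ := union_subset (incidence_ne_zero h1).1 (incidence_ne_zero h2).1
      rw [← hτ₀]
      refine (eq_of_subset_of_card_le hsub ?_).symm
      rw [mem_allF.mp hτ, ← hτcard, ← hτ₀]
    have hsum2 : ∑ ρ ∈ allF V (k-1), incidence σ ρ * incidence σ' ρ
        = incidence σ (σ ∩ σ') * incidence σ' (σ ∩ σ') := by
      apply Finset.sum_eq_single_of_mem _ (mem_allF.mpr (by omega))
      intro ρ hρ hρne
      by_cases h1 : incidence σ ρ = 0
      · rw [h1, zero_mul]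
      by_cases h2 : incidence σ' ρ = 0
      · rw [h2, mul_zero]
      exfalso
      apply hρne
      have hsub : ρ ⊆ σ ∩ σ' := subset_inter (incidence_ne_zero h1).1 (incidence_ne_zero h2).1
      refine eq_of_subset_of_card_le hsub ?_
      rw [mem_allF.mp hρ]
      omega
    rw [hsum1, hsum2]
    exact incidence_offdiag' (σ ∩ σ') σ σ' _ u w hu hw huw hσe hσ'e rfl
  · have hsum1 : ∑ τ ∈ allF V (k+1), incidence τ σ * incidence τ σ' = 0 := by
      apply Finset.sum_eq_zero
      intro τ hτ
      by_cases h1 : incidence τ σ = 0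
      · rw [h1, zero_mul]
      by_cases h2 : incidence τ σ' = 0
      · rw [h2, mul_zero]
      exfalso
      have hsub : σ ∪ σ' ⊆ τ := union_subset (incidence_ne_zero h1).1 (incidence_ne_zero h2).1
      have hc1 : (σ ∪ σ').card ≤ k + 1 := le_trans (card_le_card hsub) (le_of_eq (mem_allF.mp hτ))
      have hc2 : (σ ∪ σ').card + (σ ∩ σ').card = 2 * k := by
        rw [card_union_add_card_inter]
        omega
      omega
    have hsum2 : ∑ ρ ∈ allF V (k-1), incidence σ ρ * incidence σ' ρ = 0 := by
      apply Finset.sum_eq_zero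
      intro ρ hρ
      by_cases h1 : incidence σ ρ = 0
      · rw [h1, zero_mul]
      by_cases h2 : incidence σ' ρ = 0
      · rw [h2, mul_zero]
      exfalso
      have hsub : ρ ⊆ σ ∩ σ' := subset_inter (incidence_ne_zero h1).1 (incidence_ne_zero h2).1
      have := card_le_card hsub
      have hρc := mem_allF.mp hρ
      omega
    rw [hsum1, hsum2, add_zero]

lemma complete_identity (k : ℕ) (hk : 1 ≤ k) (z : Finset V → ℝ) :
    ∑ τ ∈ allF V (k+1), (∑ σ ∈ allF V k, incidence τ σ * z σ)^2
      + ∑ ρ ∈ allF V (k-1), (∑ σ ∈ allF V k, incidence σ ρ * z σ)^2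
    = (Fintype.card V : ℝ) * ∑ σ ∈ allF V k, z σ^2 := by
  have expand : ∀ (c : ℕ) (w : Finset V → Finset V → ℝ),
      ∑ t ∈ allF V c, (∑ σ ∈ allF V k, w t σ * z σ)^2
      = ∑ σ ∈ allF V k, ∑ σ' ∈ allF V k, z σ * z σ' * ∑ t ∈ allF V c, w t σ * w t σ' := by
    intro c w
    have h1 : ∀ t, (∑ σ ∈ allF V k, w t σ * z σ)^2
        = ∑ σ ∈ allF V k, ∑ σ' ∈ allF V k, (w t σ * z σ) * (w t σ' * z σ') := by
      intro t
      rw [sq, Finset.sum_mul_sum]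
    rw [Finset.sum_congr rfl fun t _ => h1 t, Finset.sum_comm]
    apply Finset.sum_congr rfl; intro σ _
    rw [Finset.sum_comm]
    apply Finset.sum_congr rfl; intro σ' _
    rw [Finset.mul_sum]
    apply Finset.sum_congr rfl; intro t _
    ring
  rw [expand (k+1) (fun t σ => incidence t σ), expand (k-1) (fun t σ => incidence σ t),
    ← Finset.sum_add_distrib]
  have hmain : ∀ σ ∈ allF V k,
      ((∑ σ' ∈ allF V k, z σ * z σ' * ∑ t ∈ allF V (k+1), incidence t σ * incidence t σ')
      + ∑ σ' ∈ allF V k, z σ * z σ' * ∑ t ∈ allF V (k-1), incidence σ t * incidence σ' t)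
      = (Fintype.card V : ℝ) * z σ^2 := by
    intro σ hσ
    rw [← Finset.sum_add_distrib]
    have hdiag : z σ * z σ * (∑ t ∈ allF V (k+1), incidence t σ * incidence t σ)
        + z σ * z σ * (∑ t ∈ allF V (k-1), incidence σ t * incidence σ t)
        = (Fintype.card V : ℝ) * z σ^2 := by
      rw [sum_incidence_sq_up σ k (mem_allF.mp hσ), sum_incidence_sq_down σ k (mem_allF.mp hσ) hk]
      have hkn : k ≤ Fintype.card V := (mem_allF.mp hσ) ▸ card_le_univ σ
      rw [Nat.cast_sub hkn]
      ring
    rw [Finset.sum_eq_single_of_mem σ hσ ?_]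
    · exact hdiag
    · intro σ' hσ' hne
      have h0 := sum_incidence_offdiag σ σ' k (mem_allF.mp hσ) (mem_allF.mp hσ') (Ne.symm hne) hk
      linear_combination (z σ * z σ') * h0
  rw [Finset.sum_congr rfl hmain, ← Finset.mul_sum]


lemma completion_faces_spec {X : Finset (Finset V)} (hX : IsComplex X) {k : ℕ} {τ : Finset V}
    (hτ : τ ∈ faces (completion X k) (k+1)) : τ.card = k + 1 ∧ ∀ v ∈ τ, τ.erase v ∈ X := by
  obtain ⟨hτm, hτc⟩ := mem_filter.mp hτ
  refine ⟨hτc, ?_⟩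
  rw [completion, mem_union] at hτm
  rcases hτm with h | h
  · exact fun v _ => hX τ h _ (erase_subset v τ)
  · exact (mem_filter.mp h).2.2

lemma inn_bdry_eq (X : Finset (Finset V)) (c : ℕ) (g h : Finset V → ℝ) :
    inn X c (bdry X (c+1) g) h = inn X (c+1) g (delta X c h) := by
  show ∑ σ ∈ faces X c, (∑ τ ∈ faces X (c+1), incidence τ σ * g τ) * h σ
    = ∑ τ ∈ faces X (c+1), g τ * ∑ σ ∈ faces X c, incidence τ σ * h σ
  rw [Finset.sum_congr rfl fun σ _ => Finset.sum_mul _ _ _, Finset.sum_comm]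
  apply Finset.sum_congr rfl; intro τ _
  rw [Finset.mul_sum]
  apply Finset.sum_congr rfl; intro σ _
  ring

lemma inn_self_nonneg (X : Finset (Finset V)) (c : ℕ) (g : Finset V → ℝ) :
    0 ≤ inn X c g g :=
  Finset.sum_nonneg fun _ _ => mul_self_nonneg _

/-- The coboundary from `(k-2)`-cochains, with output restricted to the `(k-1)`-faces,
as a linear map into the Euclidean space of all cochains. -/
noncomputable def resDelta (X : Finset (Finset V)) (k : ℕ) :
    (Finset V → ℝ) →ₗ[ℝ] EuclideanSpace ℝ (Finset V) where
  toFun h := WithLp.toLp 2 fun τ => if τ ∈ faces X k then delta X (k-1) h τ else 0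
  map_add' h₁ h₂ := by
    ext τ
    show (if τ ∈ faces X k then delta X (k-1) (fun s => h₁ s + h₂ s) τ else 0)
      = (if τ ∈ faces X k then delta X (k-1) h₁ τ else 0)
        + (if τ ∈ faces X k then delta X (k-1) h₂ τ else 0)
    by_cases hτ : τ ∈ faces X k
    · rw [if_pos hτ, if_pos hτ, if_pos hτ]
      show ∑ σ ∈ faces X (k-1), incidence τ σ * (h₁ σ + h₂ σ)
        = (∑ σ ∈ faces X (k-1), incidence τ σ * h₁ σ) + ∑ σ ∈ faces X (k-1), incidence τ σ * h₂ σ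
      rw [← Finset.sum_add_distrib]
      apply Finset.sum_congr rfl; intro σ _; ring
    · rw [if_neg hτ, if_neg hτ, if_neg hτ, add_zero]
  map_smul' c h := by
    ext τ
    show (if τ ∈ faces X k then delta X (k-1) (fun s => c * h s) τ else 0)
      = c * (if τ ∈ faces X k then delta X (k-1) h τ else 0)
    by_cases hτ : τ ∈ faces X k
    · rw [if_pos hτ, if_pos hτ]
      show ∑ σ ∈ faces X (k-1), incidence τ σ * (c * h σ)
        = c * ∑ σ ∈ faces X (k-1), incidence τ σ * h σ
      rw [Finset.mul_sum]
      apply Finset.sum_congr rfl; intro σ _; ring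
    · rw [if_neg hτ, if_neg hτ, mul_zero]

lemma resDelta_apply (X : Finset (Finset V)) (k : ℕ) (h : Finset V → ℝ) (τ : Finset V) :
    resDelta X k h τ = if τ ∈ faces X k then delta X (k-1) h τ else 0 := rfl

open RealInnerProductSpace in
lemma cycle_of_orthogonal (X : Finset (Finset V)) (hX : IsComplex X) (k : ℕ) (hk : 1 ≤ k)
    (z : EuclideanSpace ℝ (Finset V)) (hzo : z ∈ (LinearMap.range (resDelta X k))ᗮ)
    (hzsupp : ∀ σ, σ ∉ faces X k → z σ = 0) :
    IsCycle X k (fun s => z s) := by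
  intro σ
  by_cases hσ : σ ∈ faces X (k-1)
  · have horth := (Submodule.mem_orthogonal _ z).mp hzo
      (resDelta X k (fun ρ => if ρ = σ then 1 else 0)) ⟨_, rfl⟩
    have hinner : ⟪(resDelta X k (fun ρ => if ρ = σ then 1 else 0)), z⟫
        = bdry X k (fun s => z s) σ := by
      rw [euclid_inner]
      have h1 : ∀ τ : Finset V,
          resDelta X k (fun ρ => if ρ = σ then 1 else 0) τ * z τ
          = if τ ∈ faces X k then incidence τ σ * z τ else 0 := by
        intro τ
        rw [resDelta_apply]
        by_cases hτ : τ ∈ faces X k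
        · rw [if_pos hτ, if_pos hτ]
          congr 1
          show ∑ ρ ∈ faces X (k-1), incidence τ ρ * (if ρ = σ then (1:ℝ) else 0) = incidence τ σ
          rw [Finset.sum_eq_single_of_mem σ hσ]
          · rw [if_pos rfl, mul_one]
          · intro ρ _ hρne
            rw [if_neg hρne, mul_zero]
        · rw [if_neg hτ, if_neg hτ, zero_mul]
      rw [Finset.sum_congr rfl fun τ _ => h1 τ, Finset.sum_ite_mem, Finset.univ_inter]
      rfl
    rw [← hinner]
    exact horth
  · apply Finset.sum_eq_zero
    intro τ hτ
    by_cases hi : incidence τ σ = 0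
    · rw [hi, zero_mul]
    exfalso
    obtain ⟨hsub, hcard⟩ := incidence_ne_zero hi
    apply hσ
    refine mem_filter.mpr ⟨hX τ (mem_filter.mp hτ).1 σ hsub, ?_⟩
    have := (mem_filter.mp hτ).2
    omega

lemma key_pointwise (X : Finset (Finset V)) (k : ℕ) (A : Fin k → Finset V)
    (p : V → Fin k) (hmem : ∀ v i, v ∈ A i ↔ p v = i)
    (f : Finset V → ZMod 2) (hf : ∀ σ, f σ ≠ 0 → σ ∈ FsetLow X k A)
    (τ : Finset V) (hτc : τ.card = k + 1) (hτfac : ∀ v ∈ τ, τ.erase v ∈ X) :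
    (delta X k (fun σ => (-1:ℝ) ^ invCount p σ * ((f σ).val : ℝ)) τ) ^ 2
      = if deltaZ2 f τ ≠ 0 then 1 else 0 := by
  have hval0 : ((0 : ZMod 2)).val = 0 := rfl
  have hval1 : ((1 : ZMod 2)).val = 1 := rfl
  by_cases hcase : ∀ x ∈ τ, f (τ.erase x) = 0
  · have hd0 : delta X k (fun σ => (-1:ℝ) ^ invCount p σ * ((f σ).val : ℝ)) τ = 0 := by
      apply Finset.sum_eq_zero
      intro σ hσ
      by_cases hi : incidence τ σ = 0
      · rw [hi, zero_mul]
      · obtain ⟨hsub, hcard⟩ := incidence_ne_zero hi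
        obtain ⟨v, hv, hins⟩ := exists_eq_insert_of hsub hcard
        have hσv : σ = τ.erase v := by rw [hins, erase_insert hv]
        have hf0 : f σ = 0 := by
          rw [hσv]
          exact hcase v (hins ▸ mem_insert_self v σ)
        simp [hf0]
    have hz2 : deltaZ2 f τ = 0 := Finset.sum_eq_zero hcase
    rw [hd0, hz2]
    simp
  · push_neg at hcase
    obtain ⟨x₀, hx₀τ, hfx₀⟩ := hcase
    obtain ⟨hσ₀faces, hσ₀one⟩ := mem_filter.mp (hf _ hfx₀)
    obtain ⟨w, hwdef⟩ := card_eq_one.mp (hσ₀one (p x₀))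
    have hwσ₀ : w ∈ τ.erase x₀ ∩ A (p x₀) := hwdef ▸ mem_singleton_self w
    have hwin : w ∈ τ.erase x₀ := (mem_inter.mp hwσ₀).1
    have hwA : w ∈ A (p x₀) := (mem_inter.mp hwσ₀).2
    have hwp : p w = p x₀ := (hmem w (p x₀)).mp hwA
    have hwτ : w ∈ τ := mem_of_mem_erase hwin
    have hwx₀ : w ≠ x₀ := (mem_erase.mp hwin).1
    have hx₀A : x₀ ∈ A (p x₀) := (hmem x₀ (p x₀)).mpr rfl
    have hother : ∀ x ∈ τ, x ≠ x₀ → x ≠ w → p x ≠ p x₀ := by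
      intro x hx hxx₀ hxw hpx
      have hxσ₀ : x ∈ τ.erase x₀ := mem_erase.mpr ⟨hxx₀, hx⟩
      have hxi : x ∈ τ.erase x₀ ∩ A (p x₀) := mem_inter.mpr ⟨hxσ₀, (hmem x (p x₀)).mpr hpx⟩
      rw [hwdef, mem_singleton] at hxi
      exact hxw hxi
    have hzero : ∀ x ∈ τ, x ≠ x₀ → x ≠ w → f (τ.erase x) = 0 := by
      intro x hx hxx₀ hxw
      by_contra hne
      obtain ⟨-, hFx2⟩ := mem_filter.mp (hf _ hne)
      have hcard1 := hFx2 (p x₀)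
      have hsub2 : ({x₀, w} : Finset V) ⊆ (τ.erase x) ∩ A (p x₀) := by
        intro y hy
        rcases mem_insert.mp hy with rfl | hy
        · exact mem_inter.mpr ⟨mem_erase.mpr ⟨fun h => hxx₀ h.symm, hx₀τ⟩, hx₀A⟩
        · rw [mem_singleton] at hy
          subst hy
          exact mem_inter.mpr ⟨mem_erase.mpr ⟨fun h => hxw h.symm, hwτ⟩, hwA⟩
      have h2 : ({x₀, w} : Finset V).card = 2 := card_pair (Ne.symm hwx₀)
      have := card_le_card hsub2
      omega
    have herase_mem : ∀ x ∈ τ, τ.erase x ∈ faces X k := by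
      intro x hx
      refine mem_filter.mpr ⟨hτfac x hx, ?_⟩
      rw [card_erase_of_mem hx, hτc]
      omega
    have hpairne : τ.erase x₀ ≠ τ.erase w := by
      intro h
      have hm : w ∈ τ.erase x₀ := mem_erase.mpr ⟨hwx₀, hwτ⟩
      rw [h] at hm
      exact (mem_erase.mp hm).1 rfl
    have hdsum : delta X k (fun σ => (-1:ℝ) ^ invCount p σ * ((f σ).val : ℝ)) τ
        = incidence τ (τ.erase x₀)
            * ((-1:ℝ) ^ invCount p (τ.erase x₀) * ((f (τ.erase x₀)).val : ℝ))
          + incidence τ (τ.erase w)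
            * ((-1:ℝ) ^ invCount p (τ.erase w) * ((f (τ.erase w)).val : ℝ)) := by
      have hsubp : ({τ.erase x₀, τ.erase w} : Finset (Finset V)) ⊆ faces X k := by
        intro s hs
        rcases mem_insert.mp hs with rfl | hs'
        · exact herase_mem _ hx₀τ
        · rw [mem_singleton] at hs'
          subst hs'
          exact herase_mem _ hwτ
      have hvan : ∀ s ∈ faces X k, s ∉ ({τ.erase x₀, τ.erase w} : Finset (Finset V)) →
          incidence τ s * ((-1:ℝ) ^ invCount p s * ((f s).val : ℝ)) = 0 := by
        intro s _ hsn
        by_cases hi : incidence τ s = 0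
        · rw [hi, zero_mul]
        · obtain ⟨hsub', hcard'⟩ := incidence_ne_zero hi
          obtain ⟨v, hv, hins⟩ := exists_eq_insert_of hsub' hcard'
          have hvτ : v ∈ τ := hins ▸ mem_insert_self v s
          have hse : s = τ.erase v := by rw [hins, erase_insert hv]
          have hvx₀ : v ≠ x₀ := fun h => hsn (by rw [hse, h]; exact mem_insert_self _ _)
          have hvw : v ≠ w := fun h =>
            hsn (by rw [hse, h]; exact mem_insert.mpr (Or.inr (mem_singleton_self _)))
          have hf0 : f s = 0 := hse ▸ hzero v hvτ hvx₀ hvw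
          simp [hf0]
      calc delta X k (fun σ => (-1:ℝ) ^ invCount p σ * ((f σ).val : ℝ)) τ
          = ∑ s ∈ ({τ.erase x₀, τ.erase w} : Finset (Finset V)),
              incidence τ s * ((-1:ℝ) ^ invCount p s * ((f s).val : ℝ)) :=
            (Finset.sum_subset hsubp hvan).symm
        _ = _ := sum_pair hpairne
    have hsign := sign_N p τ x₀ w hx₀τ hwτ (Ne.symm hwx₀) hwp.symm
      (fun x hx h1 h2 => hother x hx h1 h2)
    have hs2 : (incidence τ (τ.erase x₀) * (-1:ℝ) ^ invCount p (τ.erase x₀)) ^ 2 = 1 := by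
      have hinc : incidence τ (τ.erase x₀)
          = (-1:ℝ) ^ (((τ.erase x₀).filter fun x => x < x₀).card) := by
        rw [← incidence_insert (notMem_erase x₀ τ), insert_erase hx₀τ]
      have hgen : ∀ m : ℕ, ((-1:ℝ)^m)^2 = 1 := fun m => by
        rw [← pow_mul, mul_comm, pow_mul, neg_one_sq, one_pow]
      rw [hinc, ← pow_add, hgen]
    have hdelta : delta X k (fun σ => (-1:ℝ) ^ invCount p σ * ((f σ).val : ℝ)) τ
        = (incidence τ (τ.erase x₀) * (-1:ℝ) ^ invCount p (τ.erase x₀))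
            * (((f (τ.erase x₀)).val : ℝ) - ((f (τ.erase w)).val : ℝ)) := by
      rw [hdsum, ← mul_assoc, ← mul_assoc, hsign]
      ring
    have hz2 : deltaZ2 f τ = f (τ.erase x₀) + f (τ.erase w) := by
      have hsubv : ({x₀, w} : Finset V) ⊆ τ := by
        intro y hy
        rcases mem_insert.mp hy with rfl | hy
        · exact hx₀τ
        · rw [mem_singleton] at hy; subst hy; exact hwτ
      have hvan : ∀ x ∈ τ, x ∉ ({x₀, w} : Finset V) → f (τ.erase x) = 0 := by
        intro x hx hxn
        exact hzero x hx (fun h => hxn (h ▸ mem_insert_self _ _))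
          (fun h => hxn (by rw [h]; exact mem_insert.mpr (Or.inr (mem_singleton_self _))))
      calc deltaZ2 f τ = ∑ x ∈ ({x₀, w} : Finset V), f (τ.erase x) :=
            (Finset.sum_subset hsubv hvan).symm
        _ = _ := sum_pair (Ne.symm hwx₀)
    rw [hdelta, hz2, mul_pow, hs2, one_mul]
    have hc2 : ∀ x : ZMod 2, x = 0 ∨ x = 1 := by decide
    rcases hc2 (f (τ.erase x₀)) with h1 | h1 <;> rcases hc2 (f (τ.erase w)) with h2 | h2 <;>
      rw [h1, h2]
    · rw [if_neg (by decide)]; norm_num [hval0]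
    · rw [if_pos (by decide)]; norm_num [hval0, hval1]
    · rw [if_pos (by decide)]; norm_num [hval0, hval1]
    · rw [if_neg (by decide)]; norm_num [hval1]

/-- **Theorem 3.**  For any `k`-dimensional simplicial complex `X` with
`Z_{k-1}(X;ℝ) ≠ 0`, one has `λ(X) ≤ h'(X)`. -/
theorem spectralGap_le_cheeger'
    {V : Type*} [DecidableEq V] [Fintype V] [LinearOrder V]
    (X : Finset (Finset V)) (k : ℕ)
    (hX : IsComplex X) (hdim : IsDim X k)
    (hZ : ∃ f : Finset V → ℝ, IsCycle X k f ∧ inn X k f f ≠ 0) :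
    (spectralGap X k : EReal) ≤ cheeger' X k := by
  classical
  obtain ⟨σd, hσdX, hσdc⟩ := hdim.2
  have hVne : Nonempty V := by
    have hne : σd.Nonempty := card_pos.mp (by omega)
    exact ⟨hne.choose⟩
  rcases Nat.eq_zero_or_pos k with rfl | hk
  · -- k = 0 : the defining set of `cheeger'` is empty, so `cheeger' = ⊤`.
    have hempty : {r : EReal | ∃ (A : Fin 0 → Finset V) (f : Finset V → ZMod 2),
        IsPartition A ∧ (∀ σ, f σ ≠ 0 → σ ∈ FsetLow X 0 A) ∧
        r = if (suppDelta (completion X 0) 0 f).card = 0 then (⊤ : EReal)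
            else (((Fintype.card V * (suppDelta X 0 f).card : ℝ) /
                  ((suppDelta (completion X 0) 0 f).card : ℝ) : ℝ) : EReal)} = ∅ := by
      ext r
      simp only [Set.mem_setOf_eq, Set.mem_empty_iff_false, iff_false]
      rintro ⟨A, f, hA, -, -⟩
      obtain ⟨v⟩ := hVne
      obtain ⟨i, -, -⟩ := hA.2 v
      exact i.elim0
    rw [cheeger', hempty, sInf_empty]
    exact le_top
  · rw [cheeger']
    apply le_sInf
    rintro r ⟨A, f, hA, hf, rfl⟩
    split_ifs with hden
    · exact le_top
    -- the partition labelling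
    obtain ⟨hAne, hAcov⟩ := hA
    set p : V → Fin k := fun v => (hAcov v).choose with hp
    have hpmem : ∀ v, v ∈ A (p v) := fun v => (hAcov v).choose_spec.1
    have hpuniq : ∀ v i, v ∈ A i → i = p v := fun v i h => (hAcov v).choose_spec.2 i h
    have hmem : ∀ v i, v ∈ A i ↔ p v = i :=
      fun v i => ⟨fun h => (hpuniq v i h).symm, fun h => h ▸ hpmem v⟩
    -- the signed real lift of f
    set gt : Finset V → ℝ := fun σ => (-1:ℝ) ^ invCount p σ * ((f σ).val : ℝ) with hgt
    have hgtsupp : ∀ σ, σ ∉ faces X k → gt σ = 0 := by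
      intro σ hσ
      by_cases h : f σ = 0
      · rw [hgt]; simp [h]
      · exact absurd (mem_filter.mp (hf σ h)).1 hσ
    -- orthogonal decomposition
    set B := LinearMap.range (resDelta (V := V) X k) with hB
    obtain ⟨b, hbB, z, hzB, hgteq⟩ :=
      B.exists_add_mem_mem_orthogonal (WithLp.toLp 2 gt)
    obtain ⟨hh, hhb⟩ := hbB
    have hzval : ∀ σ, z σ = gt σ - b σ := by
      intro σ
      have h1 : gt σ = (b + z) σ := by rw [← hgteq]
      have h2 : (b + z) σ = b σ + z σ := rfl
      rw [h2] at h1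
      linarith
    have hbsupp : ∀ σ, σ ∉ faces X k → b σ = 0 := by
      intro σ hσ
      rw [← hhb, resDelta_apply, if_neg hσ]
    have hzsupp : ∀ σ, σ ∉ faces X k → z σ = 0 := by
      intro σ hσ
      rw [hzval σ, hgtsupp σ hσ, hbsupp σ hσ, sub_zero]
    have hcycle : IsCycle X k (fun s => z s) :=
      cycle_of_orthogonal X hX k hk z (hB ▸ hzB) hzsupp
    -- delta of z agrees with delta of gt on completable faces
    have hdeltab : ∀ τ, τ.card = k+1 → (∀ v ∈ τ, τ.erase v ∈ X) →
        delta X k (fun s => b s) τ = 0 := by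
      intro τ hc hfac
      have h1 : delta X k (fun s => b s) τ = delta X k (delta X (k-1) hh) τ := by
        apply Finset.sum_congr rfl
        intro σ hσ
        show incidence τ σ * b σ = incidence τ σ * delta X (k-1) hh σ
        rw [← hhb, resDelta_apply, if_pos hσ]
      rw [h1]
      have hk1 : k - 1 + 1 = k := by omega
      have h2 := delta_delta_eq_zero X hX (k-1) hh τ (by omega) hfac
      rw [hk1] at h2
      exact h2
    have hdelta_eq : ∀ τ, τ.card = k+1 → (∀ v ∈ τ, τ.erase v ∈ X) →
        delta X k (fun s => z s) τ = delta X k gt τ := by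
      intro τ hc hfac
      have hsplit : delta X k (fun s => z s) τ
          = delta X k gt τ - delta X k (fun s => b s) τ := by
        show _ = (∑ σ ∈ faces X k, incidence τ σ * gt σ)
          - ∑ σ ∈ faces X k, incidence τ σ * b σ
        rw [← Finset.sum_sub_distrib]
        apply Finset.sum_congr rfl
        intro σ _
        show incidence τ σ * z σ = incidence τ σ * gt σ - incidence τ σ * b σ
        rw [hzval σ]
        ring
      rw [hsplit, hdeltab τ hc hfac, sub_zero]
    -- counting lemma
    have hcount : ∀ S : Finset (Finset V),
        (∀ τ ∈ S, τ.card = k+1 ∧ ∀ v ∈ τ, τ.erase v ∈ X) →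
        ∑ τ ∈ S, (delta X k (fun s => z s) τ)^2
          = ((S.filter fun τ => deltaZ2 f τ ≠ 0).card : ℝ) := by
      intro S hS
      have hpt : ∀ τ ∈ S, (delta X k (fun s => z s) τ)^2
          = if deltaZ2 f τ ≠ 0 then (1:ℝ) else 0 := by
        intro τ hτ
        rw [hdelta_eq τ (hS τ hτ).1 (hS τ hτ).2, hgt]
        exact key_pointwise X k A p hmem f hf τ (hS τ hτ).1 (hS τ hτ).2
      rw [Finset.sum_congr rfl hpt, Finset.sum_boole]
    -- numerator
    have hnum : inn X k (lapUp X k (fun s => z s)) (fun s => z s)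
        = ((suppDelta X k f).card : ℝ) := by
      have h1 : inn X k (lapUp X k (fun s => z s)) (fun s => z s)
          = inn X (k+1) (delta X k (fun s => z s)) (delta X k (fun s => z s)) :=
        inn_bdry_eq X k _ _
      have h2 : inn X (k+1) (delta X k (fun s => z s)) (delta X k (fun s => z s))
          = ∑ τ ∈ faces X (k+1), (delta X k (fun s => z s) τ)^2 := by
        apply Finset.sum_congr rfl
        intro τ _
        rw [sq]
      rw [h1, h2, hcount (faces X (k+1))]
      · rfl
      · intro τ hτ
        obtain ⟨hτX, hτc⟩ := mem_filter.mp hτ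
        exact ⟨hτc, fun v _ => hX τ hτX _ (erase_subset v τ)⟩
    -- denominator lower bound
    have hiden := complete_identity k hk (fun s => z s)
    have e1 : ∀ τ, ∑ σ ∈ allF V k, incidence τ σ * z σ = delta X k (fun s => z s) τ := by
      intro τ
      exact (Finset.sum_subset (faces_subset_allF X k)
        (fun σ _ hσ => by simp [hzsupp σ hσ])).symm
    have e2 : ∀ ρ ∈ allF V (k-1), (∑ σ ∈ allF V k, incidence σ ρ * z σ)^2 = 0 := by
      intro ρ _
      have h : ∑ σ ∈ allF V k, incidence σ ρ * z σ = bdry X k (fun s => z s) ρ :=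
        (Finset.sum_subset (faces_subset_allF X k)
          (fun σ _ hσ => by simp [hzsupp σ hσ])).symm
      rw [h, hcycle ρ]
      norm_num
    have e3 : ∑ σ ∈ allF V k, z σ^2 = inn X k (fun s => z s) (fun s => z s) := by
      have h : inn X k (fun s => z s) (fun s => z s) = ∑ σ ∈ faces X k, z σ^2 := by
        apply Finset.sum_congr rfl
        intro σ _
        rw [sq]
      rw [h]
      exact (Finset.sum_subset (faces_subset_allF X k)
        (fun σ _ hσ => by simp [hzsupp σ hσ])).symm
    have h₁ : ∑ τ ∈ allF V (k+1), (∑ σ ∈ allF V k, incidence τ σ * z σ)^2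
        = ∑ τ ∈ allF V (k+1), (delta X k (fun s => z s) τ)^2 :=
      Finset.sum_congr rfl fun τ _ => by rw [e1 τ]
    have h₂ : ∑ ρ ∈ allF V (k-1), (∑ σ ∈ allF V k, incidence σ ρ * z σ)^2 = 0 :=
      Finset.sum_eq_zero e2
    rw [h₁, h₂, e3, add_zero] at hiden
    -- hiden : ∑_{allF (k+1)} (delta z)² = n * inn z z
    have hsubK : faces (completion X k) (k+1) ⊆ allF V (k+1) :=
      fun τ hτ => mem_allF.mpr (mem_filter.mp hτ).2
    have hKeq : ∑ τ ∈ faces (completion X k) (k+1), (delta X k (fun s => z s) τ)^2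
        = (((suppDelta (completion X k) k f).card : ℕ) : ℝ) := by
      rw [hcount (faces (completion X k) (k+1))
        (fun τ hτ => completion_faces_spec hX hτ)]
      rfl
    have hKle := Finset.sum_le_sum_of_subset_of_nonneg hsubK
      (fun τ _ _ => sq_nonneg (delta X k (fun s => z s) τ))
    have hKbound : (((suppDelta (completion X k) k f).card : ℕ) : ℝ)
        ≤ (Fintype.card V : ℝ) * inn X k (fun s => z s) (fun s => z s) := by
      rw [← hKeq]
      calc ∑ τ ∈ faces (completion X k) (k+1), (delta X k (fun s => z s) τ)^2
          ≤ ∑ τ ∈ allF V (k+1), (delta X k (fun s => z s) τ)^2 := hKle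
        _ = _ := hiden
    -- numbers
    have hNK0 : (0:ℝ) < (((suppDelta (completion X k) k f).card : ℕ) : ℝ) := by
      exact_mod_cast Nat.pos_of_ne_zero hden
    have hn0 : (0:ℝ) < (Fintype.card V : ℝ) := by exact_mod_cast Fintype.card_pos
    have hinn_nn : 0 ≤ inn X k (fun s => z s) (fun s => z s) := inn_self_nonneg X k _
    have hzz0 : 0 < inn X k (fun s => z s) (fun s => z s) := by nlinarith
    have hNX0 : (0:ℝ) ≤ ((suppDelta X k f).card : ℝ) := Nat.cast_nonneg _
    -- spectral gap is at most the Rayleigh quotient of z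
    have hlb : ∀ q ∈ {r : ℝ | ∃ g : Finset V → ℝ, IsCycle X k g ∧ inn X k g g ≠ 0 ∧
        r = inn X k (lapUp X k g) g / inn X k g g}, 0 ≤ q := by
      rintro q ⟨g, -, -, rfl⟩
      apply div_nonneg _ (inn_self_nonneg X k g)
      rw [show lapUp X k g = bdry X (k+1) (delta X k g) from rfl, inn_bdry_eq]
      exact inn_self_nonneg X (k+1) _
    have hspec_le : spectralGap X k
        ≤ inn X k (lapUp X k (fun s => z s)) (fun s => z s)
          / inn X k (fun s => z s) (fun s => z s) := by
      apply csInf_le ⟨0, hlb⟩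
      exact ⟨fun s => z s, hcycle, hzz0.ne', rfl⟩
    have hfinal : inn X k (lapUp X k (fun s => z s)) (fun s => z s)
          / inn X k (fun s => z s) (fun s => z s)
        ≤ (Fintype.card V : ℝ) * ((suppDelta X k f).card : ℝ)
          / (((suppDelta (completion X k) k f).card : ℕ) : ℝ) := by
      rw [hnum, div_le_div_iff₀ hzz0 hNK0]
      nlinarith [mul_le_mul_of_nonneg_left hKbound hNX0]
    have : spectralGap X k
        ≤ (Fintype.card V : ℝ) * ((suppDelta X k f).card : ℝ)
          / (((suppDelta (completion X k) k f).card : ℕ) : ℝ) :=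
      le_trans hspec_le hfinal
    apply EReal.coe_le_coe_iff.mpr
    convert this using 2

end HigherCheeger
end
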